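/- arXiv:2007.00344 — 5 statements merged into one kernel-verified Lean document; each statement's English description precedes it below -/
import Mathlib

section
/- Let G be a finite abelian p-group of exponent p^n and let C be a cyclic group of order p^{n+1}. A homomorphism c : G → C/p^n C lies in the image of the map π_B : Hom(G, C) → Hom(G, C/p^n C) induced by the projection C → C/p^n C if and only if for every nonzero x ∈ G the order of c(x) is strictly less than the order of x. -/
instance fact_zero_lt_one_real : Fact ((0 : ℝ) < 1) := ⟨zero_lt_one⟩

/-- Multiplication by `p`, viewed as a lift `ZMod (p^n) →+ ZMod (p^(n+1))`. -/
noncomputable def mulP (p n : ℕ) : ZMod (p ^ n) →+ ZMod (p ^ (n + 1)) :=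
  ZMod.lift (p ^ n) ⟨zmultiplesHom _ ((p : ZMod (p ^ (n + 1)))), by
    show ((p ^ n : ℕ) : ℤ) • (p : ZMod (p ^ (n + 1))) = 0
    rw [zsmul_eq_mul]
    push_cast
    rw [← pow_succ]
    exact_mod_cast ZMod.natCast_self (p ^ (n + 1))⟩

lemma cast_mulP (p n : ℕ) (z : ZMod (p ^ n)) :
    ZMod.castHom (pow_dvd_pow p (Nat.le_succ n)) (ZMod (p ^ n)) (mulP p n z) = p • z := by
  obtain ⟨m, rfl⟩ := ZMod.intCast_surjective z
  rw [mulP, ZMod.lift_coe]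
  show (ZMod.castHom (pow_dvd_pow p (Nat.le_succ n)) (ZMod (p ^ n)))
      (m • (p : ZMod (p ^ (n + 1)))) = p • ((m : ℤ) : ZMod (p ^ n))
  rw [map_zsmul, map_natCast, zsmul_eq_mul, nsmul_eq_mul]
  ring

lemma exists_preimage_toAddCircle {N : ℕ} [NeZero N] (u : UnitAddCircle) (hu : N • u = 0) :
    ∃ z : ZMod N, ZMod.toAddCircle z = u := by
  rcases eq_or_ne u 0 with rfl | hu0
  · exact ⟨0, map_zero _⟩
  have hN : 0 < N := Nat.pos_of_ne_zero (NeZero.ne N)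
  have hfin : IsOfFinAddOrder u := isOfFinAddOrder_iff_nsmul_eq_zero.mpr ⟨N, hN, hu⟩
  have hd : 0 < addOrderOf u := hfin.addOrderOf_pos
  obtain ⟨m, hm, hg, he⟩ := (AddCircle.addOrderOf_eq_pos_iff hd).mp rfl
  obtain ⟨e, he'⟩ := addOrderOf_dvd_of_nsmul_eq_zero hu
  have he0 : e ≠ 0 := by
    rintro rfl
    rw [Nat.mul_zero] at he'
    exact hN.ne' he'
  refine ⟨((m * e : ℕ) : ZMod N), ?_⟩
  rw [ZMod.toAddCircle_natCast, ← he]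
  congr 1
  have hNr : (N : ℝ) = (addOrderOf u : ℝ) * e := by exact_mod_cast he'
  have hd0 : ((addOrderOf u : ℕ) : ℝ) ≠ 0 := by exact_mod_cast hd.ne'
  have he0' : ((e : ℕ) : ℝ) ≠ 0 := by exact_mod_cast he0
  rw [mul_one, hNr]
  push_cast
  field_simp

/-- A homomorphism `c : G → C/pⁿC` lies in the image of
`π_B : Hom(G, C) → Hom(G, C/pⁿC)` (postcomposition with the projection
`C = Z/p^{n+1} → C/pⁿC = Z/pⁿ`) if and only if for every nonzero `x ∈ G`
the order of `c x` is strictly smaller than the order of `x`, i.e. iff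
`|c x| = |x|` implies `x = 0`. -/
theorem stmt1 (p n : ℕ) [Fact p.Prime] (hn : 0 < n)
    (G : Type*) [AddCommGroup G] [Finite G]
    (hpG : ∀ g : G, ∃ k : ℕ, p ^ k • g = 0)
    (hexp : ∀ g : G, (p ^ n) • g = 0)
    (hmax : ∃ g : G, addOrderOf g = p ^ n)
    (c : G →+ ZMod (p ^ n)) :
    (∃ f : G →+ ZMod (p ^ (n + 1)),
        (ZMod.castHom (pow_dvd_pow p (Nat.le_succ n)) (ZMod (p ^ n))).toAddMonoidHom.comp f = c)
      ↔ ∀ x : G, addOrderOf (c x) = addOrderOf x → x = 0 := by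
  have hp : p.Prime := Fact.out
  haveI : NeZero (p ^ n) := ⟨pow_ne_zero n hp.ne_zero⟩
  haveI : NeZero (p ^ (n + 1)) := ⟨pow_ne_zero (n + 1) hp.ne_zero⟩
  constructor
  · rintro ⟨f, hf⟩ x hx
    by_contra hx0
    have hcx : c x = ZMod.castHom (pow_dvd_pow p (Nat.le_succ n)) (ZMod (p ^ n)) (f x) :=
      (DFunLike.congr_fun hf x).symm
    obtain ⟨k0, hk0⟩ := hpG x
    obtain ⟨k, hkle, hxk⟩ := (Nat.dvd_prime_pow hp).mp (addOrderOf_dvd_of_nsmul_eq_zero hk0)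
    obtain ⟨k', rfl⟩ : ∃ k', k = k' + 1 := by
      cases k with
      | zero =>
        exact absurd (AddMonoid.addOrderOf_eq_one_iff.mp (by simpa using hxk)) hx0
      | succ k' => exact ⟨k', rfl⟩
    -- p^(k'+1) • f x = 0
    have h1 : p ^ (k' + 1) • f x = 0 :=
      addOrderOf_dvd_iff_nsmul_eq_zero.mp (hxk ▸ addOrderOf_map_dvd f x)
    have h2 : (p ^ (n + 1)) ∣ p ^ (k' + 1) * (f x).val := by
      rw [← ZMod.natCast_eq_zero_iff, Nat.cast_mul, ZMod.natCast_zmod_val,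
        ← nsmul_eq_mul]
      exact h1
    have h3 : (p ^ n) ∣ p ^ k' * (f x).val := by
      have hh : p ^ n * p ∣ (p ^ k' * (f x).val) * p := by
        have heq : p ^ (k' + 1) * (f x).val = p ^ k' * (f x).val * p := by ring
        rw [← pow_succ, ← heq]
        exact h2
      exact (Nat.mul_dvd_mul_iff_right hp.pos).mp hh
    have h4 : p ^ k' • c x = 0 := by
      have hca : c x = (((f x).val : ℕ) : ZMod (p ^ n)) := by
        rw [hcx, ZMod.castHom_apply, ZMod.natCast_val]
      rw [hca, nsmul_eq_mul, ← Nat.cast_mul]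
      exact (ZMod.natCast_eq_zero_iff _ _).mpr h3
    have h5 : p ^ (k' + 1) ∣ p ^ k' := by
      have h6 := addOrderOf_dvd_of_nsmul_eq_zero h4
      rwa [hx, hxk] at h6
    exact absurd ((Nat.pow_dvd_pow_iff_le_right hp.one_lt).mp h5) (by omega)
  · intro hc
    -- c vanishes on p-torsion
    have hker : ∀ x : G, p • x = 0 → c x = 0 := by
      intro x hx
      by_cases hx0 : x = 0
      · simp [hx0]
      have h1 : addOrderOf x ∣ p := addOrderOf_dvd_of_nsmul_eq_zero hx
      have hx1 : addOrderOf x ≠ 1 := fun h => hx0 (AddMonoid.addOrderOf_eq_one_iff.mp h)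
      have hxp : addOrderOf x = p := ((hp.eq_one_or_self_of_dvd _ h1).resolve_left hx1)
      have h3 : addOrderOf (c x) ≠ addOrderOf x := fun h => hx0 (hc x h)
      have h2 : addOrderOf (c x) ∣ p := hxp ▸ addOrderOf_map_dvd c x
      have : addOrderOf (c x) = 1 :=
        (hp.eq_one_or_self_of_dvd _ h2).resolve_right (fun h => h3 (h.trans hxp.symm))
      exact AddMonoid.addOrderOf_eq_one_iff.mp this
    have hcongr : ∀ x x' : G, p • x = p • x' → c x = c x' := by
      intro x x' hxx
      have h0 : p • (x - x') = 0 := by rw [smul_sub, hxx, sub_self]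
      have := hker _ h0
      rw [map_sub, sub_eq_zero] at this
      exact this
    -- the multiplication-by-p endomorphism
    let φ : G →+ G := AddMonoidHom.mk' (fun x => p • x) (fun a b => smul_add p a b)
    have hφ : ∀ x : G, φ x = p • x := fun _ => rfl
    have hcongr' : ∀ x x' : G, φ x = φ x' → c x = c x' := by
      intro x x' hxx
      exact hcongr x x' (by rwa [hφ, hφ] at hxx)
    have pick : ∀ y : φ.range, ∃ x : G, φ x = (y : G) :=
      fun y => AddMonoidHom.mem_range.mp y.2
    choose pk hpk using pick
    -- the homomorphism on p•G, composed into the circle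
    let h : φ.range →+ UnitAddCircle := AddMonoidHom.mk'
      (fun y => ZMod.toAddCircle (c (pk y))) (by
        intro y₁ y₂
        rw [← map_add, ← map_add]
        refine congrArg _ ?_
        apply hcongr'
        rw [map_add, hpk, hpk, hpk]
        rfl)
    obtain ⟨k, hk⟩ := Module.Baer.extension_property_addMonoidHom
      (Module.Baer.of_divisible UnitAddCircle) φ.range.subtype Subtype.coe_injective h
    have hkey : ∀ x : G, k (φ x) = ZMod.toAddCircle (c x) := by
      intro x
      have hmem : φ x ∈ φ.range := AddMonoidHom.mem_range.mpr ⟨x, rfl⟩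
      have h1 := DFunLike.congr_fun hk ⟨φ x, hmem⟩
      have h2 : k (φ x) = ZMod.toAddCircle (c (pk ⟨φ x, hmem⟩)) := h1
      rw [h2]
      refine congrArg _ ?_
      exact hcongr' _ _ (hpk ⟨φ x, hmem⟩)
    have htor : ∀ x : G, (p ^ n) • k x = 0 := by
      intro x
      rw [← map_nsmul, hexp x, map_zero]
    choose g hg using fun x : G => exists_preimage_toAddCircle (k x) (htor x)
    have gadd : ∀ x y : G, g (x + y) = g x + g y := by
      intro x y
      apply ZMod.toAddCircle_injective (p ^ n)
      rw [map_add, hg, hg, hg, map_add]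
    let g' : G →+ ZMod (p ^ n) := AddMonoidHom.mk' g gadd
    have hpg : ∀ x : G, p • g' x = c x := by
      intro x
      apply ZMod.toAddCircle_injective (p ^ n)
      show ZMod.toAddCircle (p • g x) = _
      rw [map_nsmul, hg, ← map_nsmul k, ← hφ, hkey]
    refine ⟨(mulP p n).comp g', ?_⟩
    ext x
    show ZMod.castHom (pow_dvd_pow p (Nat.le_succ n)) (ZMod (p ^ n)) (mulP p n (g' x)) = c x
    rw [cast_mulP, hpg]
end

section
/- Let G be a finite abelian p-group, T a subgroup of index p and M a subgroup of index p^2 of G. With ℓ(M), L(M) the G-levels of M and ℓ_T(M), L_T(M) the T-levels of M, one has ℓ(M) ≤ ℓ_T(M) ≤ min{L(M), L_T(M)}, and min{L(M), L_T(M)} equals L(M) when M is not contained in T and equals L_T(M) when M ⊆ T. -/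
/-- The `p^i`-torsion subgroup `G[p^i] = {x ∈ G : p^i • x = 0}`. -/
def pTors (p i : ℕ) (G : Type*) [AddCommGroup G] : AddSubgroup G where
  carrier := {x | (p ^ i) • x = 0}
  zero_mem' := by simp
  add_mem' := by
    intro a b ha hb
    simp only [Set.mem_setOf_eq, smul_add] at *
    rw [ha, hb, add_zero]
  neg_mem' := by
    intro a ha
    simp only [Set.mem_setOf_eq, smul_neg] at *
    rw [ha, neg_zero]

/-- The lower `T`-level `ℓ_T(M) = 1 + max{ i : T[p^i] ⊆ M ∩ T }` of a subgroup `M`.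
For `T = ⊤` this is the `G`-level `ℓ(M)`. -/
noncomputable def levelL (p : ℕ) {G : Type*} [AddCommGroup G] (T M : AddSubgroup G) : ℕ :=
  1 + sSup {i : ℕ | pTors p i G ⊓ T ≤ M ⊓ T}

/-- The upper `T`-level `L_T(M) = min{ j : T[p^j] + (M ∩ T) = T }` of a subgroup `M`.
For `T = ⊤` this is the `G`-level `L(M)`. -/
noncomputable def levelU (p : ℕ) {G : Type*} [AddCommGroup G] (T M : AddSubgroup G) : ℕ :=
  sInf {j : ℕ | (pTors p j G ⊓ T) ⊔ (M ⊓ T) = T}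

/-- The subgroup `pG` of `G`. -/
def pMul (p : ℕ) (G : Type*) [AddCommGroup G] : AddSubgroup G :=
  (AddMonoidHom.mk' (fun x : G => p • x) (fun a b => smul_add p a b)).range

theorem mem_pTors {p i : ℕ} {G : Type*} [AddCommGroup G] {x : G} :
    x ∈ pTors p i G ↔ (p ^ i) • x = 0 := Iff.rfl

theorem pTors_mono {p : ℕ} (G : Type*) [AddCommGroup G] {i j : ℕ} (h : i ≤ j) :
    pTors p i G ≤ pTors p j G := by
  intro x hx
  rw [mem_pTors] at hx ⊢
  rw [← Nat.sub_add_cancel h, pow_add, mul_smul, hx, smul_zero]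

theorem pTors_zero (p : ℕ) (G : Type*) [AddCommGroup G] : pTors p 0 G = ⊥ := by
  ext x
  simp [mem_pTors]

/-- For `T` of index `p` and `M` of index `p²` in `G`:
`ℓ(M) ≤ ℓ_T(M) ≤ min{L(M), L_T(M)}`, and the minimum is `L(M)` if `M ⊄ T`
and `L_T(M)` if `M ⊆ T`. -/
theorem stmt6 (p : ℕ) [Fact p.Prime] (G : Type*) [AddCommGroup G] [Finite G]
    (hpG : ∀ g : G, ∃ k : ℕ, p ^ k • g = 0)
    (T M : AddSubgroup G) (hT : T.index = p) (hM : M.index = p ^ 2) :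
    levelL p ⊤ M ≤ levelL p T M ∧
    levelL p T M ≤ min (levelU p ⊤ M) (levelU p T M) ∧
    (¬ M ≤ T → min (levelU p ⊤ M) (levelU p T M) = levelU p ⊤ M) ∧
    (M ≤ T → min (levelU p ⊤ M) (levelU p T M) = levelU p T M) := by
  have pp : p.Prime := Fact.out
  have hp2 : 2 ≤ p := pp.two_le
  -- a uniform exponent bound
  obtain ⟨k, hk⟩ : ∃ k, ∀ g : G, p ^ k • g = 0 := by
    cases nonempty_fintype G
    refine ⟨Finset.univ.sup (fun g => (hpG g).choose), fun g => ?_⟩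
    have h1 := (hpG g).choose_spec
    have h2 : (hpG g).choose ≤ Finset.univ.sup (fun g => (hpG g).choose) :=
      Finset.le_sup (f := fun g => (hpG g).choose) (Finset.mem_univ g)
    rw [← Nat.sub_add_cancel h2, pow_add, mul_smul, h1, smul_zero]
  have hktop : pTors p k G = ⊤ := by
    ext x; simp [mem_pTors, hk x]
  -- T is not contained in M
  have hTM : ¬ T ≤ M := by
    intro h
    have hd : M.index ∣ T.index := AddSubgroup.index_dvd_of_le h
    rw [hM, hT] at hd
    have hple : p ^ 2 ≤ p := Nat.le_of_dvd (by omega) hd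
    rw [pow_two] at hple
    have h2p : 2 * p ≤ p * p := Nat.mul_le_mul hp2 le_rfl
    omega
  -- the lower sets
  set S1 : Set ℕ := {i : ℕ | pTors p i G ⊓ (⊤ : AddSubgroup G) ≤ M ⊓ ⊤} with hS1
  set S2 : Set ℕ := {i : ℕ | pTors p i G ⊓ T ≤ M ⊓ T} with hS2
  have h0S1 : (0 : ℕ) ∈ S1 := by
    simp only [hS1, Set.mem_setOf_eq, pTors_zero]
    simp
  have h0S2 : (0 : ℕ) ∈ S2 := by
    simp only [hS2, Set.mem_setOf_eq, pTors_zero]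
    simp
  have hS2bdd : BddAbove S2 := by
    refine ⟨k, fun i hi => ?_⟩
    by_contra hik
    push_neg at hik
    have hsub : pTors p k G ⊓ T ≤ M ⊓ T := le_trans
      (inf_le_inf_right T (pTors_mono G hik.le)) hi
    rw [hktop, top_inf_eq] at hsub
    exact hTM (le_trans hsub inf_le_left)
  have hS1bdd : BddAbove S1 := by
    refine ⟨k, fun i hi => ?_⟩
    by_contra hik
    push_neg at hik
    have hsub : pTors p k G ⊓ (⊤ : AddSubgroup G) ≤ M ⊓ ⊤ := le_trans
      (inf_le_inf_right ⊤ (pTors_mono G hik.le)) hi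
    rw [hktop] at hsub
    simp only [inf_top_eq, top_le_iff] at hsub
    exact hTM (hsub ▸ le_top)
  have hS1S2 : S1 ⊆ S2 := by
    intro i hi
    simp only [hS1, Set.mem_setOf_eq, inf_top_eq] at hi
    exact fun x hx => ⟨hi hx.1, hx.2⟩
  -- the upper sets
  set U1 : Set ℕ := {j : ℕ | (pTors p j G ⊓ (⊤ : AddSubgroup G)) ⊔ (M ⊓ ⊤) = ⊤} with hU1
  set U2 : Set ℕ := {j : ℕ | (pTors p j G ⊓ T) ⊔ (M ⊓ T) = T} with hU2
  have hkU1 : k ∈ U1 := by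
    simp [hU1, hktop]
  have hkU2 : k ∈ U2 := by
    simp only [hU2, Set.mem_setOf_eq, hktop, top_inf_eq]
    exact sup_eq_left.mpr inf_le_right
  -- key : an element of S2 is < any element of U2
  have key2 : ∀ i ∈ S2, ∀ j ∈ U2, i < j := by
    intro i hi j hj
    by_contra hij
    push_neg at hij
    have hsub : pTors p j G ⊓ T ≤ M ⊓ T :=
      le_trans (inf_le_inf_right T (pTors_mono G hij)) hi
    have : T ≤ M ⊓ T := by
      conv_lhs => rw [← hj]
      exact sup_le hsub le_rfl
    exact hTM (le_trans this inf_le_left)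
  -- key : an element of S2 is < any element of U1
  have key1 : ∀ i ∈ S2, ∀ j ∈ U1, i < j := by
    intro i hi j hj
    by_contra hij
    push_neg at hij
    have hsub : pTors p j G ⊓ T ≤ M :=
      le_trans (le_trans (inf_le_inf_right T (pTors_mono G hij)) hi) inf_le_left
    simp only [hU1, Set.mem_setOf_eq, inf_top_eq] at hj
    set K := pTors p j G with hK
    -- M.relindex K = p ^ 2
    have hrel : M.relIndex K = p ^ 2 := by
      have := AddSubgroup.relIndex_sup_right K M
      rw [hj, AddSubgroup.relIndex_top_right] at this
      rw [← this, hM]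
    -- M.relindex K ∣ T.relindex K
    have hdvd1 : M.relIndex K ∣ T.relIndex K := by
      rw [← AddSubgroup.inf_relIndex_right M K, ← AddSubgroup.inf_relIndex_right T K]
      exact AddSubgroup.relIndex_dvd_of_le_left K
        (le_inf (le_trans (by rw [inf_comm]) hsub) inf_le_right)
    have hdvd2 : T.relIndex K ∣ T.index := AddSubgroup.relIndex_dvd_index_of_normal T K
    rw [hT] at hdvd2
    have : p ^ 2 ∣ p := hrel ▸ dvd_trans hdvd1 hdvd2
    have hple : p ^ 2 ≤ p := Nat.le_of_dvd (by omega) this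
    rw [pow_two] at hple
    have h2p : 2 * p ≤ p * p := Nat.mul_le_mul hp2 le_rfl
    omega
  -- now the four claims
  refine ⟨?_, ?_, ?_, ?_⟩
  · -- levelL ⊤ M ≤ levelL T M
    show 1 + sSup S1 ≤ 1 + sSup S2
    exact Nat.add_le_add_left (csSup_le_csSup hS2bdd ⟨0, h0S1⟩ hS1S2) 1
  · -- levelL T M ≤ min (levelU ⊤ M) (levelU T M)
    have hmemS2 : sSup S2 ∈ S2 := Nat.sSup_mem ⟨0, h0S2⟩ hS2bdd
    have hmemU1 : sInf U1 ∈ U1 := Nat.sInf_mem ⟨k, hkU1⟩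
    have hmemU2 : sInf U2 ∈ U2 := Nat.sInf_mem ⟨k, hkU2⟩
    have h1 := key1 _ hmemS2 _ hmemU1
    have h2 := key2 _ hmemS2 _ hmemU2
    show 1 + sSup S2 ≤ min (sInf U1) (sInf U2)
    omega
  · -- ¬ M ≤ T : min is L(M)
    intro hMT
    have hTmax : T ⊔ M = ⊤ := by
      have hle : T ≤ T ⊔ M := le_sup_left
      have hmul := AddSubgroup.relIndex_mul_index hle
      rw [hT] at hmul
      have hdvd : (T ⊔ M).index ∣ p := Dvd.intro_left _ hmul
      rcases (pp.eq_one_or_self_of_dvd _ hdvd) with h | h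
      · exact AddSubgroup.index_eq_one.mp h
      · exfalso
        rw [h] at hmul
        have hone : T.relIndex (T ⊔ M) = 1 := by
          have : T.relIndex (T ⊔ M) * p = 1 * p := by rw [hmul, one_mul]
          exact Nat.eq_of_mul_eq_mul_right (by omega) this
        have := AddSubgroup.relIndex_eq_one.mp hone
        exact hMT (le_trans le_sup_right this)
    have hsub : U2 ⊆ U1 := by
      intro j hj
      simp only [hU2, Set.mem_setOf_eq] at hj
      simp only [hU1, Set.mem_setOf_eq, inf_top_eq]
      have hTle : T ≤ pTors p j G ⊔ M := by
        rw [← hj]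
        exact sup_le (le_trans inf_le_left le_sup_left)
          (le_trans inf_le_left le_sup_right)
      rw [eq_top_iff, ← hTmax]
      exact sup_le hTle le_sup_right
    have : sInf U1 ≤ sInf U2 := Nat.sInf_le (hsub (Nat.sInf_mem ⟨k, hkU2⟩))
    show min (sInf U1) (sInf U2) = sInf U1
    omega
  · -- M ≤ T : min is L_T(M)
    intro hMT
    have hsub : U1 ⊆ U2 := by
      intro j hj
      simp only [hU1, Set.mem_setOf_eq, inf_top_eq] at hj
      simp only [hU2, Set.mem_setOf_eq]
      rw [inf_eq_left.mpr hMT]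
      have heq := sup_inf_assoc_of_le (pTors p j G) hMT
      rw [sup_comm M (pTors p j G), hj, top_inf_eq] at heq
      rw [sup_comm]
      exact heq.symm
    have : sInf U2 ≤ sInf U1 := Nat.sInf_le (hsub (Nat.sInf_mem ⟨k, hkU1⟩))
    show min (sInf U1) (sInf U2) = sInf U2
    omega
end

section
/- Let p be an odd prime and G a finite abelian p-group of exponent p^n with fixed decomposition G = ⊕_{j=1}^t I_j where I_j is a free Z/p^{n_j}-module of rank r_j and n_1 < n_2 < ... < n_t = n. Let C be cyclic of order p^{n+1}, and write Ĝ = Hom(G, C/p^n C). Say two homomorphisms f, g ∈ Ĝ are Bockquivalent if there exist an automorphism σ of G, a unit λ ∈ Z_p^*, and ε in the image of π_B : Hom(G,C) → Ĝ such that g = λ·(f ∘ σ^{-1}) + ε. Then G has exactly t + 1 Bockquivalence classes. -/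
set_option linter.unusedSectionVars false
set_option linter.unusedVariables false
section Helpers

variable {p : ℕ} [Fact p.Prime]

lemma hp1 : 1 < p := (Fact.out : p.Prime).one_lt

lemma val_cast_self {m : ℕ} [NeZero m] (y : ZMod m) : ((y.val : ℕ) : ZMod m) = y :=
  ZMod.natCast_rightInverse y

lemma ppow_order {A : Type*} [AddMonoid A] {s : ℕ} {w : A}
    (hs : 1 ≤ s) (h1 : p ^ s • w = 0) (h2 : p ^ (s - 1) • w ≠ 0) :
    addOrderOf w = p ^ s := by
  have hd : addOrderOf w ∣ p ^ s := addOrderOf_dvd_iff_nsmul_eq_zero.mpr h1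
  obtain ⟨j, hj, hw⟩ := (Nat.dvd_prime_pow (Fact.out : p.Prime)).mp hd
  rcases eq_or_lt_of_le hj with h | h
  · rw [hw, h]
  · exact absurd (addOrderOf_dvd_iff_nsmul_eq_zero.mp
      (hw ▸ pow_dvd_pow p (by omega : j ≤ s - 1))) h2

lemma ppow_order_ne {A : Type*} [AddMonoid A] {s : ℕ} {w : A} (hs : 1 ≤ s)
    (h : addOrderOf w = p ^ s) : p ^ (s - 1) • w ≠ 0 := by
  intro h0
  have hd := addOrderOf_dvd_iff_nsmul_eq_zero.mpr h0
  rw [h] at hd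
  have := (Nat.pow_dvd_pow_iff_le_right (hp1 (p := p))).mp hd
  omega

lemma ppow_smul_of_pred {A : Type*} [AddMonoid A] {s : ℕ} {b : A} (hs : 1 ≤ s)
    (hb : p ^ (s - 1) • b = 0) : p ^ s • b = 0 := by
  have h : p ^ s = p ^ (s - 1) * p := by
    rw [← pow_succ]; congr 1; omega
  rw [h, mul_nsmul, hb, smul_zero]

lemma ppow_order_add {A : Type*} [AddCommMonoid A] {s : ℕ} {a b : A}
    (hs : 1 ≤ s) (ha : addOrderOf a = p ^ s) (hb : p ^ (s - 1) • b = 0) :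
    addOrderOf (a + b) = p ^ s := by
  apply ppow_order hs
  · rw [smul_add, ppow_smul_of_pred hs hb, add_zero, ← ha]
    exact addOrderOf_nsmul_eq_zero a
  · rw [smul_add, hb, add_zero]
    exact ppow_order_ne hs ha

lemma zmod_tor_val {M s : ℕ} (hs : s ≤ M) {y : ZMod (p ^ M)} (h : p ^ s • y = 0) :
    p ^ (M - s) ∣ y.val := by
  have h2 : ((p ^ s * y.val : ℕ) : ZMod (p ^ M)) = 0 := by
    have he : ((p ^ s * y.val : ℕ) : ZMod (p ^ M)) = p ^ s • y := by
      rw [Nat.cast_mul, val_cast_self, nsmul_eq_mul]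
    rw [he, h]
  have h3 : p ^ M ∣ p ^ s * y.val := (ZMod.natCast_eq_zero_iff _ _).mp h2
  obtain ⟨k, hk⟩ := h3
  refine ⟨k, ?_⟩
  have hk2 : p ^ s * y.val = p ^ s * (p ^ (M - s) * k) := by
    rw [hk, ← mul_assoc, ← pow_add]
    congr 2
    omega
  exact Nat.eq_of_mul_eq_mul_left (pow_pos (Fact.out : p.Prime).pos s) hk2

lemma eps_tor {N s : ℕ} (hs : 1 ≤ s) {y : ZMod (p ^ (N + 1))} (h : p ^ s • y = 0) :
    p ^ (s - 1) • (ZMod.castHom (pow_dvd_pow p (Nat.le_succ N)) (ZMod (p ^ N)) y) = 0 := by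
  have h1 : p ^ 1 • (p ^ (s - 1) • y) = 0 := by
    rw [← mul_nsmul, ← pow_add]
    have he : s - 1 + 1 = s := by omega
    rw [he, h]
  have h2 : p ^ (N + 1 - 1) ∣ (p ^ (s - 1) • y).val := zmod_tor_val (by omega) h1
  rw [← map_nsmul]
  have h3 : (ZMod.castHom (pow_dvd_pow p (Nat.le_succ N)) (ZMod (p ^ N))) (p ^ (s - 1) • y)
      = (((p ^ (s - 1) • y).val : ℕ) : ZMod (p ^ N)) := by
    rw [ZMod.castHom_apply, ← ZMod.natCast_val]
  rw [h3, ZMod.natCast_eq_zero_iff]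
  simpa using h2

lemma unit_of_order {M : ℕ} (hM : 1 ≤ M) {y : ZMod (p ^ M)} (h : addOrderOf y = p ^ M) :
    IsUnit y := by
  have hnd : ¬ p ∣ y.val := by
    rintro ⟨w, hw⟩
    apply ppow_order_ne hM h
    have hv : (p ^ (M - 1) : ℕ) * y.val = p ^ M * w := by
      rw [hw, ← mul_assoc, ← pow_succ]
      congr 2
      omega
    show p ^ (M - 1) • y = 0
    conv_lhs => rw [← val_cast_self y]
    rw [nsmul_eq_mul, ← Nat.cast_mul, hv, Nat.cast_mul,
      ZMod.natCast_self, zero_mul]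
  have hc : Nat.Coprime y.val (p ^ M) :=
    Nat.Coprime.pow_right M (Nat.coprime_comm.mp
      ((Nat.Prime.coprime_iff_not_dvd (Fact.out : p.Prime)).mpr hnd))
  have := (ZMod.isUnit_iff_coprime y.val (p ^ M)).mpr hc
  rwa [val_cast_self] at this

lemma order_ppow_cast {N s : ℕ} (hs1 : 1 ≤ s) (hs : s ≤ N) :
    addOrderOf ((p ^ (N - s) : ℕ) : ZMod (p ^ N)) = p ^ s := by
  apply ppow_order hs1
  · rw [nsmul_eq_mul, ← Nat.cast_mul, ← pow_add]
    have he : s + (N - s) = N := by omega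
    rw [he, ZMod.natCast_self]
  · rw [nsmul_eq_mul, ← Nat.cast_mul, ← pow_add]
    rw [Ne, ZMod.natCast_eq_zero_iff]
    rw [Nat.pow_dvd_pow_iff_le_right (hp1 (p := p))]
    omega

lemma unit_mul_order {M : ℕ} {u w : ZMod M} (hu : IsUnit u) :
    addOrderOf (u * w) = addOrderOf w :=
  addOrderOf_injective (AddMonoidHom.mulLeft u)
    (fun a b hab => hu.mul_left_cancel hab) w

end Helpers

section G

variable {p : ℕ} [Fact p.Prime] {t : ℕ} {n r : Fin t → ℕ} {N : ℕ}

/-- The group `⊕_j (Z/p^{n_j})^{r_j}`. -/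
abbrev GG (p : ℕ) {t : ℕ} (n r : Fin t → ℕ) : Type :=
  ∀ j : Fin t, Fin (r j) → ZMod (p ^ n j)

/-- Standard generators. -/
def Eg (p : ℕ) {t : ℕ} (n r : Fin t → ℕ) (k : Fin t) (i : Fin (r k)) : GG p n r :=
  Pi.single k (Pi.single i 1)

/-- Coordinate projections. -/
def prj (p : ℕ) {t : ℕ} (n r : Fin t → ℕ) (k : Fin t) (i : Fin (r k)) :
    GG p n r →+ ZMod (p ^ n k) :=
  (Pi.evalAddMonoidHom _ i).comp
    (Pi.evalAddMonoidHom (fun j => Fin (r j) → ZMod (p ^ n j)) k)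

@[simp] lemma prj_apply (k : Fin t) (i : Fin (r k)) (x : GG p n r) :
    prj p n r k i x = x k i := rfl

/-- Homomorphism from a finite cyclic group determined by the image of `1`. -/
def lf {T : Type*} [AddCommGroup T] (m : ℕ) (v : T) (hv : m • v = 0) : ZMod m →+ T :=
  ZMod.lift m ⟨zmultiplesHom T v, by simpa using hv⟩

lemma lf_apply {T : Type*} [AddCommGroup T] (m : ℕ) [NeZero m] (v : T) (hv : m • v = 0)
    (x : ZMod m) : lf m v hv x = x.val • v := by
  have hx : (x : ZMod m) = (((x.val : ℕ) : ℤ) : ZMod m) := by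
    push_cast
    rw [ZMod.natCast_rightInverse x]
  conv_lhs => rw [hx]
  rw [lf, ZMod.lift_coe, zmultiplesHom_apply, natCast_zsmul]

lemma lf_one {T : Type*} [AddCommGroup T] (m : ℕ) (v : T) (hv : m • v = 0) :
    lf m v hv 1 = v := by
  have h1 : (1 : ZMod m) = ((1 : ℤ) : ZMod m) := by push_cast; rfl
  rw [lf, h1, ZMod.lift_coe]
  rw [zmultiplesHom_apply, one_zsmul]

/-- Build a hom `GG → T` from images of the generators. -/
def mkh {T : Type*} [AddCommGroup T] (a : ∀ k : Fin t, Fin (r k) → T)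
    (ha : ∀ k i, p ^ n k • a k i = 0) : GG p n r →+ T :=
  ∑ k : Fin t, ∑ i : Fin (r k), (lf (p ^ n k) (a k i) (ha k i)).comp (prj p n r k i)

lemma mkh_Eg {T : Type*} [AddCommGroup T] (a : ∀ k : Fin t, Fin (r k) → T)
    (ha : ∀ k i, p ^ n k • a k i = 0) (k : Fin t) (i : Fin (r k)) :
    mkh a ha (Eg p n r k i) = a k i := by
  classical
  rw [mkh, AddMonoidHom.finset_sum_apply]
  rw [Finset.sum_eq_single k]
  · rw [AddMonoidHom.finset_sum_apply, Finset.sum_eq_single i]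
    · simp only [AddMonoidHom.coe_comp, Function.comp_apply, prj_apply]
      rw [show (Eg p n r k i) k i = 1 by simp [Eg, Pi.single_eq_same]]
      exact lf_one _ _ _
    · intro b _ hb
      simp only [AddMonoidHom.coe_comp, Function.comp_apply, prj_apply]
      rw [show (Eg p n r k i) k b = 0 by
        simp [Eg, Pi.single_eq_same, Pi.single_eq_of_ne hb]]
      exact map_zero _
    · intro h; exact absurd (Finset.mem_univ i) h
  · intro b _ hb
    rw [AddMonoidHom.finset_sum_apply]
    apply Finset.sum_eq_zero
    intro c _
    simp only [AddMonoidHom.coe_comp, Function.comp_apply, prj_apply]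
    rw [show (Eg p n r k i) b c = 0 by simp [Eg, Pi.single_eq_of_ne hb]]
    exact map_zero _
  · intro h; exact absurd (Finset.mem_univ k) h

lemma x_decomp (x : GG p n r) :
    ∑ k : Fin t, ∑ i : Fin (r k), (x k i).val • Eg p n r k i = x := by
  classical
  funext j
  rw [Finset.sum_apply, Finset.sum_eq_single j]
  · funext i'
    rw [Finset.sum_apply, Finset.sum_apply, Finset.sum_eq_single i']
    · simp [Eg, Pi.single_eq_same, nsmul_eq_mul, ZMod.natCast_rightInverse (x j i')]
    · intro b _ hb
      simp [Eg, Pi.single_eq_same, Pi.single_eq_of_ne hb.symm]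
    · intro h; exact absurd (Finset.mem_univ i') h
  · intro b _ hb
    rw [Finset.sum_apply]
    apply Finset.sum_eq_zero
    intro c _
    simp [Eg, Pi.single_eq_of_ne hb.symm]
  · intro h; exact absurd (Finset.mem_univ j) h

lemma hom_apply {T : Type*} [AddCommGroup T] (f : GG p n r →+ T) (x : GG p n r) :
    f x = ∑ k : Fin t, ∑ i : Fin (r k), (x k i).val • f (Eg p n r k i) := by
  conv_lhs => rw [← x_decomp x]
  rw [map_sum]
  refine Finset.sum_congr rfl fun k _ => ?_
  rw [map_sum]
  exact Finset.sum_congr rfl fun i _ => map_nsmul f _ _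

lemma Eg_tor (k : Fin t) (i : Fin (r k)) : p ^ n k • Eg p n r k i = 0 := by
  classical
  funext j i'
  show p ^ n k • (Eg p n r k i j i') = 0
  rcases eq_or_ne j k with rfl | hj
  · rcases eq_or_ne i' i with rfl | hi
    · rw [show Eg p n r j i' j i' = 1 from by simp [Eg, Pi.single_eq_same]]
      rw [nsmul_eq_mul, mul_one, ZMod.natCast_self]
    · rw [show Eg p n r j i j i' = 0 from by
        simp [Eg, Pi.single_eq_same, Pi.single_eq_of_ne hi], smul_zero]
  · rw [show Eg p n r k i j i' = (0 : ZMod (p ^ n j)) from by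
      show (Eg p n r k i j) i' = 0
      rw [show Eg p n r k i j = 0 from Pi.single_eq_of_ne hj _]
      rfl, smul_zero]

lemma hom_tor {T : Type*} [AddCommGroup T] (f : GG p n r →+ T) (k : Fin t) (i : Fin (r k)) :
    p ^ n k • f (Eg p n r k i) = 0 := by
  rw [← map_nsmul, Eg_tor, map_zero]

lemma hom_ext {T : Type*} [AddCommGroup T] {f g : GG p n r →+ T}
    (h : ∀ k i, f (Eg p n r k i) = g (Eg p n r k i)) : f = g := by
  refine AddMonoidHom.ext fun x => ?_
  rw [hom_apply f, hom_apply g]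
  refine Finset.sum_congr rfl fun k _ => Finset.sum_congr rfl fun i _ => ?_
  rw [h k i]

end G

section Main

variable {p : ℕ} [Fact p.Prime] {t : ℕ} {n r : Fin t → ℕ} {N : ℕ}

/-- The embedding `Z/p^{n_m} → Z/p^N` sending `1` to `p^{N-n_m}`. -/
def iot (p : ℕ) {t : ℕ} (n : Fin t → ℕ) (N : ℕ) (m : Fin t) (h : n m ≤ N) :
    ZMod (p ^ n m) →+ ZMod (p ^ N) :=
  lf (p ^ n m) ((p ^ (N - n m) : ℕ) : ZMod (p ^ N)) (by
    rw [nsmul_eq_mul, ← Nat.cast_mul, ← pow_add]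
    have he : n m + (N - n m) = N := by omega
    rw [he, ZMod.natCast_self])

lemma iot_apply (m : Fin t) (h : n m ≤ N) (x : ZMod (p ^ n m)) :
    iot p n N m h x = x.val • ((p ^ (N - n m) : ℕ) : ZMod (p ^ N)) :=
  lf_apply _ _ _ x

lemma iot_inj (m : Fin t) (h : n m ≤ N) : Function.Injective (iot p n N m h) := by
  rw [injective_iff_map_eq_zero]
  intro x hx
  rw [iot_apply, nsmul_eq_mul, ← Nat.cast_mul, ZMod.natCast_eq_zero_iff] at hx
  obtain ⟨c, hc⟩ := hx
  have hN' : p ^ N = p ^ n m * p ^ (N - n m) := by rw [← pow_add]; congr 1; omega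
  have hc2 : p ^ (N - n m) * x.val = p ^ (N - n m) * (p ^ n m * c) := by
    rw [mul_comm (p ^ (N - n m)) x.val, hc, hN']
    ring
  have hv : x.val = p ^ n m * c :=
    Nat.eq_of_mul_eq_mul_left (pow_pos (Fact.out : p.Prime).pos _) hc2
  have hz : ((x.val : ℕ) : ZMod (p ^ n m)) = 0 := by
    rw [hv, Nat.cast_mul, ZMod.natCast_self, zero_mul]
  rwa [val_cast_self] at hz

lemma iot_surj_tor (m : Fin t) (h : n m ≤ N) (w : ZMod (p ^ N))
    (hw : p ^ n m • w = 0) : ∃ x : ZMod (p ^ n m), iot p n N m h x = w := by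
  obtain ⟨c, hc⟩ := zmod_tor_val h hw
  refine ⟨((c : ℕ) : ZMod (p ^ n m)), ?_⟩
  rw [iot_apply, nsmul_eq_mul, ← Nat.cast_mul]
  have h2 : ((((c : ℕ) : ZMod (p ^ n m)).val : ℕ)) ≡ c [MOD p ^ n m] := by
    rw [ZMod.val_natCast]
    exact Nat.mod_modEq c (p ^ n m)
  have h3 := Nat.ModEq.mul_right' (c := p ^ (N - n m)) h2
  have h4 : p ^ n m * p ^ (N - n m) = p ^ N := by rw [← pow_add]; congr 1; omega
  rw [h4] at h3
  rw [(ZMod.natCast_eq_natCast_iff _ _ _).mpr h3]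
  rw [mul_comm, ← hc, val_cast_self]

/-- The distinguished representatives. -/
def gam (p : ℕ) {t : ℕ} (n r : Fin t → ℕ) (N : ℕ) (hr : ∀ j, 0 < r j)
    (hN : ∀ j, n j ≤ N) (m : Fin t) : GG p n r →+ ZMod (p ^ N) :=
  (iot p n N m (hN m)).comp (prj p n r m ⟨0, hr m⟩)

/-- The order-profile invariant. -/
def Aset (f : GG p n r →+ ZMod (p ^ N)) : Set ℕ :=
  {s | ∃ x : GG p n r, addOrderOf x = p ^ s ∧ addOrderOf (f x) = p ^ s}

open Classical in
/-- Indices `j` such that `p^{n_j}` is realized in the order profile. -/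
noncomputable def Jset (f : GG p n r →+ ZMod (p ^ N)) : Finset (Fin t) :=
  Finset.univ.filter (fun j => n j ∈ Aset f)

lemma ordE (hn : ∀ j, 0 < n j) (k : Fin t) (i : Fin (r k)) :
    addOrderOf (Eg p n r k i) = p ^ n k := by
  apply ppow_order (hn k) (Eg_tor k i)
  intro h0
  have h1 : p ^ (n k - 1) • (Eg p n r k i k i) = 0 := by
    have := congrFun (congrFun h0 k) i
    simpa using this
  rw [show Eg p n r k i k i = 1 from by simp [Eg, Pi.single_eq_same]] at h1
  rw [nsmul_eq_mul, mul_one, ZMod.natCast_eq_zero_iff,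
    Nat.pow_dvd_pow_iff_le_right (hp1 (p := p))] at h1
  have := hn k
  omega

lemma memA (hn : ∀ j, 0 < n j) {f : GG p n r →+ ZMod (p ^ N)} {k : Fin t} {i : Fin (r k)}
    (h : addOrderOf (f (Eg p n r k i)) = p ^ n k) : n k ∈ Aset f :=
  ⟨Eg p n r k i, ordE hn k i, h⟩

lemma existsTop (hn : ∀ j, 0 < n j) {f : GG p n r →+ ZMod (p ^ N)} {s : ℕ}
    (hs : 1 ≤ s) (h : s ∈ Aset f) :
    ∃ k i, addOrderOf (f (Eg p n r k i)) = p ^ n k ∧ s ≤ n k := by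
  obtain ⟨x, hx, hfx⟩ := h
  by_contra hc
  push_neg at hc
  apply ppow_order_ne hs hfx
  rw [hom_apply f x, Finset.smul_sum]
  apply Finset.sum_eq_zero
  intro k _
  rw [Finset.smul_sum]
  apply Finset.sum_eq_zero
  intro i _
  have hator : p ^ n k • f (Eg p n r k i) = 0 := hom_tor f k i
  rcases le_or_gt s (n k) with hsk | hsk
  · have hne : addOrderOf (f (Eg p n r k i)) ≠ p ^ n k := by
      intro he
      exact absurd (hc k i he) (not_lt.mpr hsk)
    have h1 : p ^ (n k - 1) • f (Eg p n r k i) = 0 := by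
      obtain ⟨j, hj, hja⟩ := (Nat.dvd_prime_pow (Fact.out : p.Prime)).mp
        (addOrderOf_dvd_iff_nsmul_eq_zero.mpr hator)
      have hj' : j ≤ n k - 1 := by
        rcases eq_or_lt_of_le hj with h' | h'
        · exact absurd (hja.trans (congrArg (p ^ ·) h')) hne
        · omega
      exact addOrderOf_dvd_iff_nsmul_eq_zero.mp (hja ▸ pow_dvd_pow p hj')
    have hxv : p ^ (n k - s) ∣ (x k i).val := by
      apply zmod_tor_val hsk
      have hx0 : p ^ s • x = 0 := by
        rw [← hx]
        exact addOrderOf_nsmul_eq_zero x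
      have := congrFun (congrFun hx0 k) i
      simpa using this
    obtain ⟨w, hw⟩ := hxv
    rw [hw, smul_smul]
    have he : p ^ (s - 1) * (p ^ (n k - s) * w) = w * p ^ (n k - 1) := by
      rw [← mul_assoc, ← pow_add]
      have : s - 1 + (n k - s) = n k - 1 := by omega
      rw [this, mul_comm]
    rw [he, mul_nsmul', h1, smul_zero]
  · rw [smul_smul]
    have he : p ^ (s - 1) * (x k i).val = ((x k i).val * p ^ (s - 1 - n k)) * p ^ n k := by
      rw [mul_assoc, ← pow_add]
      have h5 : s - 1 - n k + n k = s - 1 := by omega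
      rw [h5, mul_comm]
    rw [he, mul_nsmul', hator, smul_zero]


/-- Bockquivalence: `f ≈ g` iff `g = λ·(f ∘ σ⁻¹) + ε` for some automorphism `σ` of
`G`, some unit `λ ∈ Z_p^*` (acting through `Z_p → Z/p^N`), and some `ε` in the image
of `π_B : Hom(G, C) → Hom(G, C/p^N C)`, where `C = Z/p^{N+1}` and `C/p^N C = Z/p^N`. -/
def BockEquiv (p N : ℕ) [Fact p.Prime] (G : Type*) [AddCommGroup G]
    (f g : G →+ ZMod (p ^ N)) : Prop :=
  ∃ (σ : G ≃+ G) (lam : (PadicInt p)ˣ) (e : G →+ ZMod (p ^ (N + 1))),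
    ∀ x : G,
      g x = PadicInt.toZModPow N (lam : PadicInt p) * f (σ.symm x)
        + ZMod.castHom (pow_dvd_pow p (Nat.le_succ N)) (ZMod (p ^ N)) (e x)

section Inv

variable {p : ℕ} [Fact p.Prime] {t : ℕ} {n r : Fin t → ℕ} {N : ℕ}

lemma Aset_eq {f g : GG p n r →+ ZMod (p ^ N)}
    (h : BockEquiv p N (∀ j : Fin t, Fin (r j) → ZMod (p ^ n j)) f g) :
    Aset f = Aset g := by
  obtain ⟨σ, lam, e, he⟩ := h
  have hlam : IsUnit (PadicInt.toZModPow N (lam : PadicInt p)) :=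
    lam.isUnit.map (PadicInt.toZModPow N)
  ext s
  rcases Nat.eq_zero_or_pos s with rfl | hs
  · have h0 : ∀ (h : GG p n r →+ ZMod (p ^ N)), (0 : ℕ) ∈ Aset h := fun h =>
      ⟨0, by simp, by simp⟩
    constructor <;> intro _ <;> exact h0 _
  constructor
  · rintro ⟨x, hx, hfx⟩
    refine ⟨σ x, ?_, ?_⟩
    · rw [show (σ x) = σ.toAddMonoidHom x from rfl,
        addOrderOf_injective σ.toAddMonoidHom σ.injective x, hx]
    · rw [he (σ x), AddEquiv.symm_apply_apply]
      apply ppow_order_add hs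
      · rw [unit_mul_order hlam, hfx]
      · apply eps_tor hs
        rw [← map_nsmul]
        have hx0 : p ^ s • (σ x) = 0 := by
          rw [← map_nsmul]
          have : p ^ s • x = 0 := by rw [← hx]; exact addOrderOf_nsmul_eq_zero x
          rw [this, map_zero]
        rw [hx0, map_zero]
  · rintro ⟨x, hx, hgx⟩
    refine ⟨σ.symm x, ?_, ?_⟩
    · rw [show (σ.symm x) = σ.symm.toAddMonoidHom x from rfl,
        addOrderOf_injective σ.symm.toAddMonoidHom σ.symm.injective x, hx]
    · have hx0 : p ^ s • x = 0 := by rw [← hx]; exact addOrderOf_nsmul_eq_zero x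
      have heq : PadicInt.toZModPow N (lam : PadicInt p) * f (σ.symm x)
          = g x + (-(ZMod.castHom (pow_dvd_pow p (Nat.le_succ N)) (ZMod (p ^ N)) (e x))) := by
        rw [he x]; ring
      have hord : addOrderOf (PadicInt.toZModPow N (lam : PadicInt p) * f (σ.symm x)) = p ^ s := by
        rw [heq]
        apply ppow_order_add hs hgx
        rw [smul_neg, eps_tor hs, neg_zero]
        rw [← map_nsmul, hx0, map_zero]
      rwa [unit_mul_order hlam] at hord

lemma Jset_eq {f g : GG p n r →+ ZMod (p ^ N)}
    (h : BockEquiv p N (∀ j : Fin t, Fin (r j) → ZMod (p ^ n j)) f g) :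
    Jset f = Jset g := by
  classical
  apply Finset.filter_congr
  intro j _
  rw [Aset_eq h]

end Inv

section Auto

variable {p : ℕ} [Fact p.Prime] {t : ℕ} {n r : Fin t → ℕ} {N : ℕ}

/-- Replace the `(m, i₀)` coordinate by `v`. -/
def updC (m : Fin t) (i₀ : Fin (r m)) (x : GG p n r) (v : ZMod (p ^ n m)) : GG p n r :=
  Function.update x m (Function.update (x m) i₀ v)

lemma updC_same (m : Fin t) (i₀ : Fin (r m)) (x : GG p n r) (v : ZMod (p ^ n m)) :
    updC m i₀ x v m i₀ = v := by
  rw [updC, Function.update_self, Function.update_self]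

lemma updC_ne_fst (m : Fin t) (i₀ : Fin (r m)) (x : GG p n r) (v : ZMod (p ^ n m))
    {k : Fin t} (hk : k ≠ m) : updC m i₀ x v k = x k := by
  rw [updC, Function.update_of_ne hk]

lemma updC_ne_snd (m : Fin t) (i₀ : Fin (r m)) (x : GG p n r) (v : ZMod (p ^ n m))
    {i : Fin (r m)} (hi : i ≠ i₀) : updC m i₀ x v m i = x m i := by
  rw [updC, Function.update_self, Function.update_of_ne hi]

lemma updC_self (m : Fin t) (i₀ : Fin (r m)) (x : GG p n r) :
    updC m i₀ x (x m i₀) = x := by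
  rw [updC, Function.update_eq_self, Function.update_eq_self]

lemma updC_updC (m : Fin t) (i₀ : Fin (r m)) (x : GG p n r) (v w : ZMod (p ^ n m)) :
    updC m i₀ (updC m i₀ x v) w = updC m i₀ x w := by
  rw [updC, updC, updC, Function.update_idem, Function.update_self, Function.update_idem]

lemma updC_add (m : Fin t) (i₀ : Fin (r m)) (x y : GG p n r) (v w : ZMod (p ^ n m)) :
    updC m i₀ (x + y) (v + w) = updC m i₀ x v + updC m i₀ y w := by
  funext k
  rcases eq_or_ne k m with rfl | hk
  · funext i
    show updC k i₀ (x + y) (v + w) k i = updC k i₀ x v k i + updC k i₀ y w k i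
    rcases eq_or_ne i i₀ with rfl | hi
    · rw [updC_same, updC_same, updC_same]
    · rw [updC_ne_snd _ _ _ _ hi, updC_ne_snd _ _ _ _ hi, updC_ne_snd _ _ _ _ hi]
      rfl
  · show updC m i₀ (x + y) (v + w) k = updC m i₀ x v k + updC m i₀ y w k
    rw [updC_ne_fst _ _ _ _ hk, updC_ne_fst _ _ _ _ hk, updC_ne_fst _ _ _ _ hk]
    rfl

lemma updC_split (m : Fin t) (i₀ : Fin (r m)) (x : GG p n r) (v : ZMod (p ^ n m)) :
    updC m i₀ x v = updC m i₀ x 0 + v.val • Eg p n r m i₀ := by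
  funext k
  rcases eq_or_ne k m with rfl | hk
  · funext i
    show updC k i₀ x v k i = updC k i₀ x 0 k i + v.val • (Eg p n r k i₀ k i)
    rcases eq_or_ne i i₀ with rfl | hi
    · rw [updC_same, updC_same, show Eg p n r k i k i = 1 from by simp [Eg, Pi.single_eq_same]]
      rw [zero_add, nsmul_eq_mul, mul_one, val_cast_self]
    · rw [updC_ne_snd _ _ _ _ hi, updC_ne_snd _ _ _ _ hi,
        show Eg p n r k i₀ k i = 0 from by
          simp [Eg, Pi.single_eq_same, Pi.single_eq_of_ne hi], smul_zero, add_zero]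
  · show updC m i₀ x v k = updC m i₀ x 0 k + v.val • (Eg p n r m i₀ k)
    rw [updC_ne_fst _ _ _ _ hk, updC_ne_fst _ _ _ _ hk,
      show Eg p n r m i₀ k = 0 from Pi.single_eq_of_ne hk _, smul_zero, add_zero]

lemma d_updC (m : Fin t) (i₀ : Fin (r m)) (d : GG p n r →+ ZMod (p ^ n m))
    (x : GG p n r) (v : ZMod (p ^ n m)) :
    d (updC m i₀ x v) = d (updC m i₀ x 0) + v * d (Eg p n r m i₀) := by
  rw [updC_split, map_add, map_nsmul, nsmul_eq_mul, val_cast_self]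

/-- Elementary automorphism replacing the `(m, i₀)` coordinate by `d x`, where the
`(m, i₀)` coefficient of `d` is a unit. -/
def elem (m : Fin t) (i₀ : Fin (r m)) (d : GG p n r →+ ZMod (p ^ n m))
    (u : (ZMod (p ^ n m))ˣ) (hd : d (Eg p n r m i₀) = u) : GG p n r ≃+ GG p n r where
  toFun x := updC m i₀ x (d x)
  invFun y := updC m i₀ y (↑u⁻¹ * (y m i₀ - d (updC m i₀ y 0)))
  left_inv x := by
    dsimp only
    have h0 : updC m i₀ (updC m i₀ x (d x)) 0 = updC m i₀ x 0 := updC_updC _ _ _ _ _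
    have hy : updC m i₀ x (d x) m i₀ = d x := updC_same _ _ _ _
    have hdx : d x = d (updC m i₀ x 0) + (x m i₀) * ↑u := by
      conv_lhs => rw [← updC_self m i₀ x]
      rw [d_updC, hd]
    rw [h0, hy, hdx, add_sub_cancel_left]
    rw [show (↑u⁻¹ * (x m i₀ * ↑u) : ZMod (p ^ n m)) = x m i₀ from by
      rw [mul_comm (x m i₀), ← mul_assoc, Units.inv_mul, one_mul]]
    rw [updC_updC, updC_self]
  right_inv y := by
    dsimp only
    have h0 : updC m i₀ (updC m i₀ y (↑u⁻¹ * (y m i₀ - d (updC m i₀ y 0)))) 0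
        = updC m i₀ y 0 := updC_updC _ _ _ _ _
    have hdz : d (updC m i₀ y (↑u⁻¹ * (y m i₀ - d (updC m i₀ y 0)))) = y m i₀ := by
      rw [d_updC, hd]
      rw [mul_assoc, mul_comm ((↑u⁻¹ : ZMod (p ^ n m))), mul_assoc, Units.mul_inv, mul_one]
      rw [add_sub_cancel]
    rw [hdz, updC_updC, updC_self]
  map_add' x y := by
    rw [map_add]
    exact updC_add _ _ _ _ _ _

/-- Swap of two coordinates inside block `m`, as an automorphism. -/
def swp (p : ℕ) {t : ℕ} (n r : Fin t → ℕ) (m : Fin t) (i₁ i₂ : Fin (r m)) :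
    GG p n r ≃+ GG p n r where
  toFun x := Function.update x m (x m ∘ Equiv.swap i₁ i₂)
  invFun x := Function.update x m (x m ∘ Equiv.swap i₁ i₂)
  left_inv x := by
    dsimp only
    funext k
    rcases eq_or_ne k m with rfl | hk
    · rw [Function.update_self, Function.update_self]
      funext i
      show x k (Equiv.swap i₁ i₂ (Equiv.swap i₁ i₂ i)) = x k i
      rw [Equiv.swap_apply_self]
    · rw [Function.update_of_ne hk, Function.update_of_ne hk]
  right_inv x := by
    dsimp only
    funext k
    rcases eq_or_ne k m with rfl | hk
    · rw [Function.update_self, Function.update_self]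
      funext i
      show x k (Equiv.swap i₁ i₂ (Equiv.swap i₁ i₂ i)) = x k i
      rw [Equiv.swap_apply_self]
    · rw [Function.update_of_ne hk, Function.update_of_ne hk]
  map_add' x y := by
    funext k
    rcases eq_or_ne k m with rfl | hk
    · rw [Function.update_self]
      show (fun i => (x + y) k (Equiv.swap i₁ i₂ i))
        = (Function.update x k (x k ∘ Equiv.swap i₁ i₂) + Function.update y k (y k ∘ Equiv.swap i₁ i₂)) k
      rw [show (Function.update x k (x k ∘ Equiv.swap i₁ i₂)
          + Function.update y k (y k ∘ Equiv.swap i₁ i₂)) k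
          = Function.update x k (x k ∘ Equiv.swap i₁ i₂) k
            + Function.update y k (y k ∘ Equiv.swap i₁ i₂) k from rfl]
      rw [Function.update_self, Function.update_self]
      rfl
    · rw [Function.update_of_ne hk]
      show (x + y) k = (Function.update x m (x m ∘ Equiv.swap i₁ i₂)
          + Function.update y m (y m ∘ Equiv.swap i₁ i₂)) k
      rw [show (Function.update x m (x m ∘ Equiv.swap i₁ i₂)
          + Function.update y m (y m ∘ Equiv.swap i₁ i₂)) k
          = Function.update x m (x m ∘ Equiv.swap i₁ i₂) k
            + Function.update y m (y m ∘ Equiv.swap i₁ i₂) k from rfl]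
      rw [Function.update_of_ne hk, Function.update_of_ne hk]
      rfl

lemma swp_swp (m : Fin t) (i₁ i₂ : Fin (r m)) (x : GG p n r) :
    swp p n r m i₁ i₂ (swp p n r m i₁ i₂ x) = x :=
  (swp p n r m i₁ i₂).left_inv x

lemma swp_Eg (m : Fin t) (i₁ i₂ : Fin (r m)) :
    swp p n r m i₁ i₂ (Eg p n r m i₁) = Eg p n r m i₂ := by
  classical
  funext k
  rcases eq_or_ne k m with rfl | hk
  · show Function.update (Eg p n r k i₁) k ((Eg p n r k i₁) k ∘ Equiv.swap i₁ i₂) k = _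
    rw [Function.update_self]
    funext i
    show (Eg p n r k i₁) k (Equiv.swap i₁ i₂ i) = (Eg p n r k i₂) k i
    rcases eq_or_ne i i₂ with rfl | hi
    · rw [Equiv.swap_apply_right]
      simp [Eg, Pi.single_eq_same]
    · have hsw : Equiv.swap i₁ i₂ i ≠ i₁ := by
        intro hc
        exact hi (by
          have := congrArg (Equiv.swap i₁ i₂) hc
          rwa [Equiv.swap_apply_self, Equiv.swap_apply_left] at this)
      simp [Eg, Pi.single_eq_same, Pi.single_eq_of_ne hsw, Pi.single_eq_of_ne hi]
  · show Function.update (Eg p n r m i₁) m ((Eg p n r m i₁) m ∘ Equiv.swap i₁ i₂) k = _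
    rw [Function.update_of_ne hk]
    rw [show (Eg p n r m i₁) k = 0 from Pi.single_eq_of_ne hk _,
      show (Eg p n r m i₂) k = 0 from Pi.single_eq_of_ne hk _]

end Auto

section Complete

variable {p : ℕ} [Fact p.Prime] {t : ℕ} {n r : Fin t → ℕ} {N : ℕ}

/-- Canonical class representatives: `0` and the `γ_m`. -/
noncomputable def rep (p : ℕ) [Fact p.Prime] {t : ℕ} (n r : Fin t → ℕ) (N : ℕ)
    (hr : ∀ j, 0 < r j) (hN : ∀ j, n j ≤ N) :
    WithBot (Fin t) → (GG p n r →+ ZMod (p ^ N)) :=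
  fun o => WithBot.recBotCoe 0 (fun m => gam p n r N hr hN m) o

lemma mem_Jset {f : GG p n r →+ ZMod (p ^ N)} {j : Fin t} :
    j ∈ Jset f ↔ n j ∈ Aset f := by
  classical
  constructor
  · intro h
    exact (Finset.mem_filter.mp h).2
  · intro h
    exact Finset.mem_filter.mpr ⟨Finset.mem_univ _, h⟩

lemma Jset_zero (hn : ∀ j, 0 < n j) : Jset (0 : GG p n r →+ ZMod (p ^ N)) = ∅ := by
  classical
  apply Finset.eq_empty_iff_forall_notMem.mpr
  intro j hj
  obtain ⟨x, hx, h0⟩ := mem_Jset.mp hj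
  rw [AddMonoidHom.zero_apply, addOrderOf_zero] at h0
  have h2 : 1 < p ^ n j := Nat.one_lt_pow (by have := hn j; omega) (hp1 (p := p))
  omega

lemma Jset_gam (hn : ∀ j, 0 < n j) (hmono : StrictMono n) (hr : ∀ j, 0 < r j)
    (hN : ∀ j, n j ≤ N) (j : Fin t) :
    (Jset (gam p n r N hr hN j)).max = (j : WithBot (Fin t)) := by
  classical
  apply le_antisymm
  · apply Finset.max_le
    intro k hk
    obtain ⟨k', i', hord, hle'⟩ := existsTop hn (hn k) (mem_Jset.mp hk)
    have hk'j : k' = j := by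
      by_contra hne
      have hz : gam p n r N hr hN j (Eg p n r k' i') = 0 := by
        show iot p n N j (hN j) ((Eg p n r k' i') j ⟨0, hr j⟩) = 0
        rw [show (Eg p n r k' i') j = 0 from Pi.single_eq_of_ne (Ne.symm hne) _]
        exact map_zero _
      rw [hz, addOrderOf_zero] at hord
      have h2 : 1 < p ^ n k' := Nat.one_lt_pow (by have := hn k'; omega) (hp1 (p := p))
      omega
    subst hk'j
    exact WithBot.coe_le_coe.mpr (hmono.le_iff_le.mp hle')
  · apply Finset.le_max
    refine mem_Jset.mpr ⟨Eg p n r j ⟨0, hr j⟩, ordE hn j _, ?_⟩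
    have h1 : gam p n r N hr hN j (Eg p n r j ⟨0, hr j⟩)
        = ((p ^ (N - n j) : ℕ) : ZMod (p ^ N)) := by
      show iot p n N j (hN j) ((Eg p n r j ⟨0, hr j⟩) j ⟨0, hr j⟩) = _
      rw [show (Eg p n r j ⟨0, hr j⟩) j ⟨0, hr j⟩ = 1 from by simp [Eg, Pi.single_eq_same]]
      rw [iot_apply]
      haveI : Fact (1 < p ^ n j) :=
        ⟨Nat.one_lt_pow (by have := hn j; omega) (hp1 (p := p))⟩
      rw [ZMod.val_one, one_nsmul]
    rw [h1, order_ppow_cast (hn j) (hN j)]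

lemma complete (hn : ∀ j, 0 < n j) (hmono : StrictMono n) (hr : ∀ j, 0 < r j)
    (hN : ∀ j, n j ≤ N) (f : GG p n r →+ ZMod (p ^ N)) :
    BockEquiv p N (∀ j : Fin t, Fin (r j) → ZMod (p ^ n j))
      (rep p n r N hr hN ((Jset f).max)) f := by
  classical
  have hb'' : ∀ (k : Fin t) (i : Fin (r k)), ∃ b : ZMod (p ^ (N + 1)),
      p ^ n k • b = 0 ∧ ZMod.castHom (pow_dvd_pow p (Nat.le_succ N)) (ZMod (p ^ N)) b
        = (if p ^ (n k - 1) • f (Eg p n r k i) = 0 then f (Eg p n r k i) else 0) := by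
    intro k i
    have h1 : p ^ (n k - 1) • (if p ^ (n k - 1) • f (Eg p n r k i) = 0
        then f (Eg p n r k i) else 0) = 0 := by
      split
      · assumption
      · rw [smul_zero]
    have hdvd : p ^ (N - (n k - 1)) ∣ (if p ^ (n k - 1) • f (Eg p n r k i) = 0
        then f (Eg p n r k i) else 0).val := by
      apply zmod_tor_val ?_ h1
      have := hN k
      omega
    obtain ⟨w, hw⟩ := hdvd
    refine ⟨((p ^ (N - (n k - 1)) * w : ℕ) : ZMod (p ^ (N + 1))), ?_, ?_⟩
    · rw [nsmul_eq_mul, ← Nat.cast_mul, ← mul_assoc, ← pow_add]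
      have he : n k + (N - (n k - 1)) = N + 1 := by
        have h2 := hN k
        have h3 := hn k
        omega
      rw [he, Nat.cast_mul, ZMod.natCast_self, zero_mul]
    · rw [map_natCast, ← hw, val_cast_self]
  choose b'' hb''tor hb''cast using hb''
  have he''E : ∀ k i, mkh b'' hb''tor (Eg p n r k i) = b'' k i := fun k i => mkh_Eg _ _ k i
  rcases hmax : (Jset f).max with _ | m
  · have hrep : rep p n r N hr hN none = 0 := rfl
    rw [hrep]
    have hJ : Jset f = ∅ := Finset.max_eq_bot.mp hmax
    have hAll : ∀ k i, p ^ (n k - 1) • f (Eg p n r k i) = 0 := by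
      intro k i
      by_contra hc
      have hord : addOrderOf (f (Eg p n r k i)) = p ^ n k :=
        ppow_order (hn k) (hom_tor f k i) hc
      have hmem : k ∈ Jset f := mem_Jset.mpr (memA hn hord)
      rw [hJ] at hmem
      exact absurd hmem (Finset.notMem_empty k)
    refine ⟨AddEquiv.refl _, 1, mkh b'' hb''tor, fun x => ?_⟩
    have hfe : f = (ZMod.castHom (pow_dvd_pow p (Nat.le_succ N))
        (ZMod (p ^ N))).toAddMonoidHom.comp (mkh b'' hb''tor) := by
      apply hom_ext
      intro k i
      rw [show ((ZMod.castHom (pow_dvd_pow p (Nat.le_succ N))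
          (ZMod (p ^ N))).toAddMonoidHom.comp (mkh b'' hb''tor)) (Eg p n r k i)
          = ZMod.castHom (pow_dvd_pow p (Nat.le_succ N)) (ZMod (p ^ N))
              ((mkh b'' hb''tor) (Eg p n r k i)) from rfl]
      rw [he''E, hb''cast, if_pos (hAll k i)]
    rw [AddMonoidHom.zero_apply, mul_zero, zero_add]
    exact DFunLike.congr_fun hfe x
  · have hmJ : m ∈ Jset f := Finset.mem_of_max hmax
    have hle : ∀ k, k ∈ Jset f → k ≤ m := by
      intro k hk
      have h1 := Finset.le_max hk
      rw [hmax] at h1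
      exact WithBot.coe_le_coe.mp h1
    obtain ⟨k0, i0, hk0, hk0le⟩ := existsTop hn (hn m) (mem_Jset.mp hmJ)
    have hk0m : k0 = m := le_antisymm
      (hle k0 (mem_Jset.mpr (memA hn hk0)))
      (hmono.le_iff_le.mp hk0le)
    subst hk0m
    have hrep : rep p n r N hr hN (some k0) = gam p n r N hr hN k0 := rfl
    rw [hrep]
    have hcond : ¬ p ^ (n k0 - 1) • f (Eg p n r k0 i0) = 0 := ppow_order_ne (hn k0) hk0
    have ha'tor : ∀ k i, p ^ n k0 • (f (Eg p n r k i)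
        - (if p ^ (n k - 1) • f (Eg p n r k i) = 0 then f (Eg p n r k i) else 0)) = 0 := by
      intro k i
      by_cases hc : p ^ (n k - 1) • f (Eg p n r k i) = 0
      · rw [if_pos hc, sub_self, smul_zero]
      · rw [if_neg hc, sub_zero]
        have hord : addOrderOf (f (Eg p n r k i)) = p ^ n k :=
          ppow_order (hn k) (hom_tor f k i) hc
        have hkm : k ≤ k0 := hle k (mem_Jset.mpr (memA hn hord))
        have hdvd : addOrderOf (f (Eg p n r k i)) ∣ p ^ n k0 := by
          rw [hord]
          exact pow_dvd_pow p (hmono.monotone hkm)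
        exact addOrderOf_dvd_iff_nsmul_eq_zero.mp hdvd
    have hbex : ∀ k i, ∃ x : ZMod (p ^ n k0), iot p n N k0 (hN k0) x
        = f (Eg p n r k i) - (if p ^ (n k - 1) • f (Eg p n r k i) = 0
            then f (Eg p n r k i) else 0) :=
      fun k i => iot_surj_tor k0 (hN k0) _ (ha'tor k i)
    choose b hbspec using hbex
    have hbtor : ∀ k i, p ^ n k • b k i = 0 := by
      intro k i
      apply iot_inj k0 (hN k0)
      rw [map_nsmul, hbspec k i, map_zero, smul_sub]
      have h1 : p ^ n k • f (Eg p n r k i) = 0 := hom_tor f k i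
      have h2 : p ^ n k • (if p ^ (n k - 1) • f (Eg p n r k i) = 0
          then f (Eg p n r k i) else 0) = 0 := by
        split
        · exact h1
        · rw [smul_zero]
      rw [h1, h2, sub_zero]
    have hbord : addOrderOf (b k0 i0) = p ^ n k0 := by
      rw [← addOrderOf_injective (iot p n N k0 (hN k0)) (iot_inj k0 (hN k0)) (b k0 i0)]
      rw [hbspec k0 i0, if_neg hcond, sub_zero, hk0]
    have hu : IsUnit (b k0 i0) := unit_of_order (hn k0) hbord
    have hdE : (mkh b hbtor).comp (swp p n r k0 ⟨0, hr k0⟩ i0).toAddMonoidHom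
        (Eg p n r k0 ⟨0, hr k0⟩) = b k0 i0 := by
      rw [show ((mkh b hbtor).comp (swp p n r k0 ⟨0, hr k0⟩ i0).toAddMonoidHom)
          (Eg p n r k0 ⟨0, hr k0⟩)
          = mkh b hbtor (swp p n r k0 ⟨0, hr k0⟩ i0 (Eg p n r k0 ⟨0, hr k0⟩)) from rfl]
      rw [swp_Eg]
      exact mkh_Eg _ _ k0 i0
    set σ := (swp p n r k0 ⟨0, hr k0⟩ i0).trans
      (elem k0 ⟨0, hr k0⟩ ((mkh b hbtor).comp (swp p n r k0 ⟨0, hr k0⟩ i0).toAddMonoidHom)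
        hu.unit (by rw [hdE, IsUnit.unit_spec])) with hσdef
    have hσ : ∀ x, σ x k0 ⟨0, hr k0⟩ = mkh b hbtor x := by
      intro x
      show updC k0 ⟨0, hr k0⟩ (swp p n r k0 ⟨0, hr k0⟩ i0 x)
          (((mkh b hbtor).comp (swp p n r k0 ⟨0, hr k0⟩ i0).toAddMonoidHom)
            (swp p n r k0 ⟨0, hr k0⟩ i0 x)) k0 ⟨0, hr k0⟩ = mkh b hbtor x
      rw [updC_same]
      show mkh b hbtor (swp p n r k0 ⟨0, hr k0⟩ i0 (swp p n r k0 ⟨0, hr k0⟩ i0 x))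
          = mkh b hbtor x
      rw [swp_swp]
    have hkey : f = (iot p n N k0 (hN k0)).comp (mkh b hbtor)
        + (ZMod.castHom (pow_dvd_pow p (Nat.le_succ N))
            (ZMod (p ^ N))).toAddMonoidHom.comp (mkh b'' hb''tor) := by
      apply hom_ext
      intro k i
      rw [show ((iot p n N k0 (hN k0)).comp (mkh b hbtor)
          + (ZMod.castHom (pow_dvd_pow p (Nat.le_succ N))
              (ZMod (p ^ N))).toAddMonoidHom.comp (mkh b'' hb''tor)) (Eg p n r k i)
          = iot p n N k0 (hN k0) (mkh b hbtor (Eg p n r k i))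
            + ZMod.castHom (pow_dvd_pow p (Nat.le_succ N)) (ZMod (p ^ N))
                ((mkh b'' hb''tor) (Eg p n r k i)) from rfl]
      rw [mkh_Eg, hbspec k i, he''E, hb''cast, sub_add_cancel]
    refine ⟨σ.symm, 1, mkh b'' hb''tor, fun x => ?_⟩
    rw [AddEquiv.symm_symm, Units.val_one, map_one, one_mul]
    have hg : gam p n r N hr hN k0 (σ x) = iot p n N k0 (hN k0) (mkh b hbtor x) := by
      rw [show gam p n r N hr hN k0 (σ x)
          = iot p n N k0 (hN k0) ((σ x) k0 ⟨0, hr k0⟩) from rfl]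
      rw [hσ x]
    rw [hg]
    exact DFunLike.congr_fun hkey x

end Complete

/-- For `G = ⊕_{j=1}^t (Z/p^{n_j})^{r_j}` with `n₁ < n₂ < ⋯ < n_t = N` and `p` an odd
prime, `Ĝ = Hom(G, C/p^N C)` has exactly `t + 1` Bockquivalence classes. -/
theorem stmt11 (p : ℕ) [Fact p.Prime] (hodd : Odd p)
    (t : ℕ) (ht : 0 < t) (n : Fin t → ℕ) (hmono : StrictMono n) (hn : ∀ j, 0 < n j)
    (r : Fin t → ℕ) (hr : ∀ j, 0 < r j)
    (N : ℕ) (hN : ∀ j, n j ≤ N) (hNmax : ∃ j, n j = N) :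
    Nat.card
        (Quot (BockEquiv p N (∀ j : Fin t, Fin (r j) → ZMod (p ^ n j))))
      = t + 1 := by
  classical
  have inv : ∀ f g : GG p n r →+ ZMod (p ^ N),
      BockEquiv p N (∀ j : Fin t, Fin (r j) → ZMod (p ^ n j)) f g →
        (Jset f).max = (Jset g).max := fun f g h => by rw [Jset_eq h]
  let E1 : Quot (BockEquiv p N (∀ j : Fin t, Fin (r j) → ZMod (p ^ n j)))
      ≃ WithBot (Fin t) :=
    { toFun := Quot.lift (fun f => (Jset f).max) inv
      invFun := fun o => Quot.mk _ (rep p n r N hr hN o)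
      left_inv := by
        apply Quot.ind
        intro f
        exact Quot.sound (complete hn hmono hr hN f)
      right_inv := by
        intro o
        rcases o with _ | j
        · show (Jset (rep p n r N hr hN none)).max = none
          rw [show rep p n r N hr hN none = 0 from rfl, Jset_zero hn, Finset.max_empty]
          rfl
        · show (Jset (rep p n r N hr hN (some j))).max = some j
          rw [show rep p n r N hr hN (some j) = gam p n r N hr hN j from rfl]
          exact Jset_gam hn hmono hr hN j }
  rw [Nat.card_congr E1]
  have e2 : WithBot (Fin t) ≃ Fin (t + 1) := (finSuccEquiv t).symm
  rw [Nat.card_congr e2, Nat.card_eq_fintype_card, Fintype.card_fin]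
end Main
end

section
/- Let G be a finite abelian p-group of exponent p^n with cyclic decomposition indexed by distinct cyclic orders p^{n_1} < … < p^{n_t}, C cyclic of order p^{n+1}, Ĝ = Hom(G, C/p^n C), and π̂_j : Ĝ → Hom(I_j, C/p^n C) the projection to the j-th summand. If c ∈ Ĝ satisfies |im π̂_j(c)| = p^{n_j} and |im π̂_l(c)| < p^{n_l} for all l > j, then c is Bockquivalent to γ_j^*. -/
/-- The embedding `Z/p^m → Z/p^N`, `1 ↦ p^{N-m}`, of the cyclic group of order `p^m`
onto the `p^m`-torsion of the cyclic group of order `p^N`. -/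
noncomputable def embed (p m N : ℕ) (h : m ≤ N) : ZMod (p ^ m) →+ ZMod (p ^ N) :=
  ZMod.lift (p ^ m)
    ⟨zmultiplesHom (ZMod (p ^ N)) ((p : ZMod (p ^ N)) ^ (N - m)), by
      have h1 : ((p ^ m : ℕ) : ℤ) • ((p : ZMod (p ^ N)) ^ (N - m))
          = (p : ZMod (p ^ N)) ^ m * (p : ZMod (p ^ N)) ^ (N - m) := by
        rw [zsmul_eq_mul]; push_cast; ring
      rw [zmultiplesHom_apply, h1, ← pow_add, Nat.add_sub_cancel' h]
      have h2 : ((p ^ N : ℕ) : ZMod (p ^ N)) = 0 := ZMod.natCast_self _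
      rwa [Nat.cast_pow] at h2⟩

/-- Homs out of `ZMod m` are determined by the value at 1. -/
lemma zmodHom_ext {m : ℕ} [NeZero m] {H : Type*} [AddCommMonoid H] {f g : ZMod m →+ H}
    (h : f 1 = g 1) : f = g := by
  ext a
  have ha : a = a.val • (1 : ZMod m) := by
    rw [nsmul_eq_mul, mul_one, ZMod.natCast_zmod_val]
  rw [ha, map_nsmul, map_nsmul, h]

/-- The hom `ZMod m →+ H` sending 1 to a torsion element `y`. -/
noncomputable def cyc {H : Type*} [AddCommGroup H] (m : ℕ) (y : H)
    (hy : ((m : ℕ) : ℤ) • y = 0) : ZMod m →+ H :=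
  ZMod.lift m ⟨zmultiplesHom H y, by simpa using hy⟩

@[simp] lemma cyc_one {H : Type*} [AddCommGroup H] (m : ℕ) (y : H) (hy) :
    cyc m y hy 1 = y := by
  rw [cyc, show (1 : ZMod m) = ((1 : ℤ) : ZMod m) by simp, ZMod.lift_coe]
  simp

@[simp] lemma embed_one (p m N : ℕ) (h : m ≤ N) :
    embed p m N h 1 = (p : ZMod (p ^ N)) ^ (N - m) := by
  rw [embed, show (1 : ZMod (p^m)) = ((1 : ℤ) : ZMod (p^m)) by simp, ZMod.lift_coe]
  simp

section GInfra

variable {p t : ℕ} {n r : Fin t → ℕ}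

/-- generator of the `(l,k)` cyclic summand -/
def gen (p : ℕ) (n r : Fin t → ℕ) (l : Fin t) (k : Fin (r l)) :
    ∀ l : Fin t, Fin (r l) → ZMod (p ^ n l) :=
  Pi.single l (Pi.single k 1)

/-- inclusion of the `(l,k)` cyclic summand -/
def inj (p : ℕ) (n r : Fin t → ℕ) (l : Fin t) (k : Fin (r l)) :
    ZMod (p ^ n l) →+ ∀ l : Fin t, Fin (r l) → ZMod (p ^ n l) :=
  (AddMonoidHom.single _ l).comp (AddMonoidHom.single (fun _ : Fin (r l) => ZMod (p ^ n l)) k)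

lemma inj_apply (l : Fin t) (k : Fin (r l)) (a : ZMod (p ^ n l)) :
    inj p n r l k a = Pi.single l (Pi.single k a) := rfl

lemma inj_one (l : Fin t) (k : Fin (r l)) : inj p n r l k 1 = gen p n r l k := rfl

lemma pi_decomp (x : ∀ l : Fin t, Fin (r l) → ZMod (p ^ n l)) :
    x = ∑ l, ∑ k, inj p n r l k (x l k) := by
  have h1 : ∀ l : Fin t, ∑ k, inj p n r l k (x l k)
      = (AddMonoidHom.single (fun l : Fin t => Fin (r l) → ZMod (p ^ n l)) l) (x l) := by
    intro l
    rw [show (AddMonoidHom.single (fun l : Fin t => Fin (r l) → ZMod (p ^ n l)) l) (x l)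
      = (AddMonoidHom.single _ l) (∑ k, Pi.single k (x l k)) by rw [Finset.univ_sum_single],
      map_sum]
    rfl
  rw [Finset.sum_congr rfl (fun l _ => h1 l)]
  conv_lhs => rw [← Finset.univ_sum_single x]
  rfl

/-- Two homs out of `G` agreeing on generators are equal. -/
lemma G_hom_ext [NeZero p] {H : Type*} [AddCommMonoid H]
    {F₁ F₂ : (∀ l : Fin t, Fin (r l) → ZMod (p ^ n l)) →+ H}
    (h : ∀ (l : Fin t) (k : Fin (r l)), F₁ (gen p n r l k) = F₂ (gen p n r l k)) :
    F₁ = F₂ := by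
  have key : ∀ l k, F₁.comp (inj p n r l k) = F₂.comp (inj p n r l k) := by
    intro l k
    have : NeZero (p ^ n l) := ⟨pow_ne_zero _ (NeZero.ne p)⟩
    exact zmodHom_ext (by simpa [inj_one] using h l k)
  ext l k a
  exact DFunLike.congr_fun (key l k) a

end GInfra

section MkHom

variable {p t : ℕ} {n r : Fin t → ℕ}

/-- Build a hom out of `G` from torsion values on the generators. -/
noncomputable def mkHom {H : Type*} [AddCommGroup H] (h : ∀ l : Fin t, Fin (r l) → H)
    (tor : ∀ (l : Fin t) (k : Fin (r l)), ((p ^ n l : ℕ) : ℤ) • h l k = 0) :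
    (∀ l : Fin t, Fin (r l) → ZMod (p ^ n l)) →+ H :=
  ∑ l, ∑ k, (cyc (p ^ n l) (h l k) (tor l k)).comp
    ((Pi.evalAddMonoidHom _ k).comp
      (Pi.evalAddMonoidHom (fun l : Fin t => Fin (r l) → ZMod (p ^ n l)) l))

lemma mkHom_gen {H : Type*} [AddCommGroup H] (h : ∀ l : Fin t, Fin (r l) → H)
    (tor : ∀ (l : Fin t) (k : Fin (r l)), ((p ^ n l : ℕ) : ℤ) • h l k = 0)
    (l' : Fin t) (k' : Fin (r l')) :
    mkHom h tor (gen p n r l' k') = h l' k' := by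
  classical
  simp only [mkHom, AddMonoidHom.finset_sum_apply, AddMonoidHom.coe_comp,
    Function.comp_apply, Pi.evalAddMonoidHom_apply]
  rw [Finset.sum_eq_single l' (fun l _ hne => by simp [gen, Pi.single_eq_of_ne hne]) (by simp)]
  rw [Finset.sum_eq_single k' (fun k _ hne => by simp [gen, Pi.single_eq_of_ne hne]) (by simp)]
  simp [gen]

end MkHom

section ZModOrder

variable {p : ℕ} [Fact p.Prime]

lemma neZero_ppow {N : ℕ} : NeZero (p ^ N) :=
  ⟨pow_ne_zero _ (Fact.out : p.Prime).ne_zero⟩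

lemma exists_of_pow_mul_eq_zero {N m : ℕ} (hm : m ≤ N) {y : ZMod (p ^ N)}
    (h : (p : ZMod (p ^ N)) ^ m * y = 0) :
    ∃ z : ZMod (p ^ N), y = z * (p : ZMod (p ^ N)) ^ (N - m) := by
  haveI : NeZero (p ^ N) := neZero_ppow
  have hp : 0 < p := (Fact.out : p.Prime).pos
  have h1 : ((p ^ m * y.val : ℕ) : ZMod (p ^ N)) = 0 := by
    push_cast [ZMod.natCast_zmod_val]; exact h
  rw [ZMod.natCast_eq_zero_iff] at h1
  have h2 : p ^ (N - m) ∣ y.val := by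
    have h3 : p ^ m * p ^ (N - m) ∣ p ^ m * y.val := by
      rwa [← pow_add, Nat.add_sub_cancel' hm]
    exact (Nat.mul_dvd_mul_iff_left (pow_pos hp m)).1 h3
  obtain ⟨d, hd⟩ := h2
  exact ⟨(d : ZMod (p ^ N)), by rw [← ZMod.natCast_zmod_val y, hd]; push_cast; ring⟩

lemma pow_mul_pow_eq_zero {N m : ℕ} (hm : m ≤ N) (z : ZMod (p ^ N)) :
    (p : ZMod (p ^ N)) ^ m * (z * (p : ZMod (p ^ N)) ^ (N - m)) = 0 := by
  have : (p : ZMod (p ^ N)) ^ m * (p : ZMod (p ^ N)) ^ (N - m) = 0 := by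
    rw [← pow_add, Nat.add_sub_cancel' hm, ← Nat.cast_pow, ZMod.natCast_self]
  calc (p : ZMod (p ^ N)) ^ m * (z * (p : ZMod (p ^ N)) ^ (N - m))
      = z * ((p : ZMod (p ^ N)) ^ m * (p : ZMod (p ^ N)) ^ (N - m)) := by ring
    _ = 0 := by rw [this, mul_zero]

/-- cast-down-then-up doesn't change a product with `p^{N-m}` -/
lemma castdown_val_mul {N m : ℕ} (hm : m ≤ N) (z : ZMod (p ^ N)) :
    (((ZMod.castHom (pow_dvd_pow p hm) (ZMod (p ^ m)) z).val : ZMod (p ^ N)))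
        * (p : ZMod (p ^ N)) ^ (N - m) = z * (p : ZMod (p ^ N)) ^ (N - m) := by
  haveI : NeZero (p ^ N) := neZero_ppow
  haveI : NeZero (p ^ m) := neZero_ppow
  have h1 : (ZMod.castHom (pow_dvd_pow p hm) (ZMod (p ^ m)) z) = ((z.val : ℕ) : ZMod (p ^ m)) := by
    rw [ZMod.castHom_apply, ← ZMod.natCast_val]
  have h2 : (ZMod.castHom (pow_dvd_pow p hm) (ZMod (p ^ m)) z).val = z.val % p ^ m := by
    rw [h1, ZMod.val_natCast]
  rw [h2]
  have h3 : ((z.val : ℕ) : ZMod (p ^ N))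
      = ((z.val % p ^ m : ℕ) : ZMod (p ^ N)) + (p : ZMod (p ^ N)) ^ m * ((z.val / p ^ m : ℕ)) := by
    conv_lhs => rw [← Nat.mod_add_div z.val (p ^ m)]
    push_cast; ring
  have h4 : (z : ZMod (p ^ N)) = ((z.val : ℕ) : ZMod (p ^ N)) := (ZMod.natCast_zmod_val z).symm
  conv_rhs => rw [h4, h3]
  have h5 : (p : ZMod (p ^ N)) ^ m * ((z.val / p ^ m : ℕ)) * (p : ZMod (p ^ N)) ^ (N - m) = 0 := by
    have := pow_mul_pow_eq_zero (p := p) hm ((z.val / p ^ m : ℕ) : ZMod (p ^ N))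
    calc (p : ZMod (p ^ N)) ^ m * ((z.val / p ^ m : ℕ)) * (p : ZMod (p ^ N)) ^ (N - m)
        = (p : ZMod (p ^ N)) ^ m * (((z.val / p ^ m : ℕ)) * (p : ZMod (p ^ N)) ^ (N - m)) := by ring
      _ = 0 := this
  rw [add_mul, h5, add_zero]

/-- if `z·p^{N-m} = 0` then `z` casts down to `0` in `ZMod (p^m)`. -/
lemma castdown_eq_zero {N m : ℕ} (hm : m ≤ N) {z : ZMod (p ^ N)}
    (h : z * (p : ZMod (p ^ N)) ^ (N - m) = 0) :
    ZMod.castHom (pow_dvd_pow p hm) (ZMod (p ^ m)) z = 0 := by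
  have h' : (p : ZMod (p ^ N)) ^ (N - m) * z = 0 := by rwa [mul_comm]
  obtain ⟨w, hw⟩ := exists_of_pow_mul_eq_zero (Nat.sub_le N m) h'
  rw [Nat.sub_sub_self hm] at hw
  rw [hw, map_mul, map_pow, map_natCast, ← Nat.cast_pow, ZMod.natCast_self, mul_zero]

end ZModOrder

section Extraction

variable {p : ℕ} [Fact p.Prime]

lemma exists_unit_of_not_small {N m : ℕ} (hm1 : 1 ≤ m) (hm : m ≤ N) {y : ZMod (p ^ N)}
    (h : (p : ZMod (p ^ N)) ^ m * y = 0)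
    (h2 : ¬ ((p : ZMod (p ^ N)) ^ (m - 1) * y = 0)) :
    ∃ u : (ZMod (p ^ N))ˣ, y = (u : ZMod (p ^ N)) * (p : ZMod (p ^ N)) ^ (N - m) := by
  haveI : NeZero (p ^ N) := neZero_ppow
  have hp : p.Prime := Fact.out
  obtain ⟨z, hz⟩ := exists_of_pow_mul_eq_zero hm h
  by_cases hu : IsUnit z
  · exact ⟨hu.unit, by rw [hz, IsUnit.unit_spec]⟩
  · exfalso
    apply h2
    have hdvd : p ∣ z.val := by
      by_contra hnd
      exact hu (by rw [← ZMod.natCast_zmod_val z]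
                   exact (ZMod.isUnit_iff_coprime _ _).2
                     (((Nat.Prime.coprime_iff_not_dvd hp).2 hnd).symm.pow_right N))
    obtain ⟨d, hd⟩ := hdvd
    have hzz : z = (p : ZMod (p ^ N)) * ((d : ℕ) : ZMod (p ^ N)) := by
      rw [← ZMod.natCast_zmod_val z, hd]; push_cast; ring
    rw [hz, hzz]
    have e1 : (p : ZMod (p ^ N)) ^ (m - 1)
          * ((p : ZMod (p ^ N)) * ((d : ℕ) : ZMod (p ^ N)) * (p : ZMod (p ^ N)) ^ (N - m))
        = ((d : ℕ) : ZMod (p ^ N)) * ((p : ZMod (p ^ N)) ^ ((m - 1) + 1 + (N - m))) := by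
      rw [pow_add, pow_add]; ring
    rw [e1, show (m - 1) + 1 + (N - m) = N by omega, ← Nat.cast_pow, ZMod.natCast_self, mul_zero]

lemma exists_full_gen {N M R : ℕ} (hM1 : 1 ≤ M) (hMN : M ≤ N)
    (f : (Fin R → ZMod (p ^ M)) →+ ZMod (p ^ N))
    (hcard : Nat.card (Set.range fun v => f v) = p ^ M) :
    ∃ i : Fin R, ¬ ((p : ZMod (p ^ N)) ^ (M - 1) * f (Pi.single i 1) = 0) := by
  haveI : NeZero (p ^ M) := neZero_ppow
  haveI : NeZero (p ^ N) := neZero_ppow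
  have hp : p.Prime := Fact.out
  by_contra hall
  push_neg at hall
  set s := N - (M - 1) with hs
  set K := AddSubgroup.zmultiples ((p : ZMod (p ^ N)) ^ s) with hKdef
  have hmem : ∀ v, f v ∈ K := by
    intro v
    have hv : v = ∑ i, Pi.single i (v i) := (Finset.univ_sum_single v).symm
    rw [hv, map_sum]
    apply AddSubgroup.sum_mem
    intro i _
    have h1 : Pi.single i (v i)
        = (v i).val • (Pi.single i (1 : ZMod (p ^ M)) : Fin R → ZMod (p ^ M)) := by
      rw [← Pi.single_smul', nsmul_eq_mul, mul_one, ZMod.natCast_zmod_val]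
    rw [h1, map_nsmul]
    apply AddSubgroup.nsmul_mem
    obtain ⟨z, hz⟩ := exists_of_pow_mul_eq_zero (show M - 1 ≤ N by omega) (hall i)
    rw [hz, AddSubgroup.mem_zmultiples_iff]
    exact ⟨(z.val : ℤ), by rw [zsmul_eq_mul]; push_cast [ZMod.natCast_zmod_val]; rfl⟩
  have hsub : (Set.range fun v => f v) ⊆ (K : Set (ZMod (p ^ N))) := by
    rintro _ ⟨v, rfl⟩; exact hmem v
  have hK : Nat.card K = p ^ (M - 1) := by
    rw [hKdef, Nat.card_zmultiples, ← Nat.cast_pow,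
      ZMod.addOrderOf_coe _ (NeZero.ne _),
      Nat.gcd_eq_right (pow_dvd_pow p (by omega : s ≤ N)),
      Nat.pow_div (by omega) hp.pos]
    congr 1; omega
  have hle : Nat.card (Set.range fun v => f v) ≤ Nat.card K := by
    calc Nat.card (Set.range fun v => f v) ≤ Nat.card (K : Set (ZMod (p ^ N))) :=
          Nat.card_mono (Set.toFinite _) hsub
      _ = Nat.card K := by rw [SetLike.coe_sort_coe]
  rw [hcard, hK] at hle
  exact absurd hle (not_le.2 (Nat.pow_lt_pow_right hp.one_lt (by omega)))

lemma small_of_card_lt {N M R : ℕ} (hM1 : 1 ≤ M) (hMN : M ≤ N)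
    (f : (Fin R → ZMod (p ^ M)) →+ ZMod (p ^ N))
    (hcard : Nat.card (Set.range fun v => f v) < p ^ M) :
    ∀ i : Fin R, (p : ZMod (p ^ N)) ^ (M - 1) * f (Pi.single i 1) = 0 := by
  haveI : NeZero (p ^ M) := neZero_ppow
  haveI : NeZero (p ^ N) := neZero_ppow
  have hp : p.Prime := Fact.out
  intro i
  by_contra hne
  set y := f (Pi.single i 1) with hy
  have hyM : ((p ^ M : ℕ)) • y = 0 := by
    rw [hy, ← map_nsmul, ← Pi.single_smul', nsmul_eq_mul, mul_one, ZMod.natCast_self,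
      Pi.single_zero, map_zero]
  have hord : addOrderOf y = p ^ M := by
    have hdvd : addOrderOf y ∣ p ^ M := addOrderOf_dvd_of_nsmul_eq_zero hyM
    obtain ⟨d, hdM, hdd⟩ := (Nat.dvd_prime_pow hp).1 hdvd
    rcases eq_or_lt_of_le hdM with hcase | hcase
    · rw [hdd, hcase]
    · exfalso
      apply hne
      have h1 : addOrderOf y ∣ p ^ (M - 1) := hdd ▸ pow_dvd_pow p (by omega)
      have h0 : ((p ^ (M - 1) : ℕ)) • y = 0 := addOrderOf_dvd_iff_nsmul_eq_zero.1 h1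
      rw [nsmul_eq_mul, Nat.cast_pow] at h0
      exact h0
  have hsub : ((AddSubgroup.zmultiples y : AddSubgroup (ZMod (p ^ N))) : Set (ZMod (p ^ N)))
      ⊆ Set.range fun v => f v := by
    rintro w hw
    rw [SetLike.mem_coe, AddSubgroup.mem_zmultiples_iff] at hw
    obtain ⟨k, hk⟩ := hw
    refine ⟨Pi.single i ((k : ZMod (p ^ M))), ?_⟩
    have h1 : Pi.single i ((k : ZMod (p ^ M)))
        = k • (Pi.single i (1 : ZMod (p ^ M)) : Fin R → ZMod (p ^ M)) := by
      rw [← Pi.single_smul', zsmul_eq_mul, mul_one]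
    show f _ = w
    rw [h1, map_zsmul, ← hy, hk]
  have hge : p ^ M ≤ Nat.card (Set.range fun v => f v) := by
    have h2 : Nat.card (AddSubgroup.zmultiples y) ≤ Nat.card (Set.range fun v => f v) := by
      simpa using Nat.card_mono (Set.toFinite (Set.range fun v => f v)) hsub
    rwa [Nat.card_zmultiples y, hord] at h2
  omega

end Extraction

lemma exists_padic_unit {p : ℕ} [Fact p.Prime] {N : ℕ} (hN1 : 1 ≤ N) (u : (ZMod (p ^ N))ˣ) :
    ∃ lam : (PadicInt p)ˣ,
      PadicInt.toZModPow N (lam : PadicInt p) = (u : ZMod (p ^ N)) := by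
  haveI : NeZero (p ^ N) := neZero_ppow
  have hp : p.Prime := Fact.out
  set m := (u : ZMod (p ^ N)).val with hm
  have hcop : ¬ p ∣ m := by
    intro hdvd
    have h1 : IsUnit ((m : ℕ) : ZMod (p ^ N)) := by
      rw [hm, ZMod.natCast_zmod_val]; exact u.isUnit
    have h2 : Nat.Coprime m (p ^ N) := (ZMod.isUnit_iff_coprime _ _).1 h1
    have h3 : p ∣ p ^ N := dvd_pow_self p (by omega)
    have h4 : p ∣ 1 := h2 ▸ Nat.dvd_gcd hdvd h3
    have := Nat.le_of_dvd one_pos h4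
    have := hp.one_lt
    omega
  have hu : IsUnit ((m : ℕ) : PadicInt p) := by
    rw [PadicInt.isUnit_iff]
    have hle : ‖((m : ℕ) : PadicInt p)‖ ≤ 1 := PadicInt.norm_le_one _
    have hlt : ¬ ‖((m : ℕ) : PadicInt p)‖ < 1 := by
      rw [show (((m : ℕ) : PadicInt p)) = (((m : ℕ) : ℤ) : PadicInt p) by push_cast; rfl,
        PadicInt.norm_int_lt_one_iff_dvd]
      exact_mod_cast hcop
    exact le_antisymm hle (not_lt.1 hlt)
  refine ⟨hu.unit, ?_⟩
  rw [IsUnit.unit_spec, map_natCast, hm, ZMod.natCast_zmod_val]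

section Auto

variable {p t : ℕ} {n r : Fin t → ℕ}

/-- permuting the coordinates of the `j`-th component is an automorphism -/
def swapComp (p : ℕ) (n r : Fin t → ℕ) (j : Fin t) (e : Equiv.Perm (Fin (r j))) :
    (∀ l : Fin t, Fin (r l) → ZMod (p ^ n l)) ≃+ (∀ l : Fin t, Fin (r l) → ZMod (p ^ n l)) where
  toFun x := Function.update x j (x j ∘ e)
  invFun x := Function.update x j (x j ∘ e.symm)
  left_inv x := by
    funext l
    by_cases h : l = j
    · subst h
      simp only [Function.update_self]
      funext m; simp
    · simp only [Function.update_of_ne h]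
  right_inv x := by
    funext l
    by_cases h : l = j
    · subst h
      simp only [Function.update_self]
      funext m; simp
    · simp only [Function.update_of_ne h]
  map_add' x y := by
    funext l
    by_cases h : l = j
    · subst h
      simp only [Pi.add_apply, Function.update_self]
      funext m; simp
    · simp only [Pi.add_apply, Function.update_of_ne h]

lemma swapComp_gen_ne (j : Fin t) (e : Equiv.Perm (Fin (r j))) (l : Fin t) (k : Fin (r l))
    (hlj : l ≠ j) : swapComp p n r j e (gen p n r l k) = gen p n r l k := by
  funext l'
  by_cases h : l' = j
  · subst h
    show Function.update _ l' _ l' = _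
    rw [Function.update_self]
    have h0 : gen p n r l k l' = 0 := Pi.single_eq_of_ne (Ne.symm hlj) _
    rw [h0]
    funext m
    simp [h0]
  · show Function.update _ j _ l' = _
    rw [Function.update_of_ne h]

lemma swapComp_gen_eq (j : Fin t) (e : Equiv.Perm (Fin (r j))) (k : Fin (r j)) :
    swapComp p n r j e (gen p n r j k) = gen p n r j (e.symm k) := by
  funext l'
  by_cases h : l' = j
  · subst h
    show Function.update _ l' _ l' = _
    rw [Function.update_self]
    have h0 : gen p n r l' k l' = Pi.single k 1 := Pi.single_eq_same _ _
    have h1 : gen p n r l' (e.symm k) l' = Pi.single (e.symm k) 1 := Pi.single_eq_same _ _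
    rw [h0, h1]
    funext m
    simp only [Function.comp_apply, Pi.single_apply]
    by_cases hm : m = e.symm k
    · subst hm; simp
    · rw [if_neg hm, if_neg (by rwa [Equiv.apply_eq_iff_eq_symm_apply])]
  · show Function.update _ j _ l' = _
    rw [Function.update_of_ne h]
    show gen p n r j k l' = gen p n r j (e.symm k) l'
    rw [show gen p n r j k l' = 0 from Pi.single_eq_of_ne h _,
      show gen p n r j (e.symm k) l' = 0 from Pi.single_eq_of_ne h _]

/-- transvection-type automorphism `x ↦ x - E (ψ x)` -/
def transvection {G H : Type*} [AddCommGroup G] [AddCommGroup H]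
    (E : H →+ G) (ψ : G →+ H) (hψ : ∀ a, ψ (E a) = 0) : G ≃+ G where
  toFun x := x - E (ψ x)
  invFun x := x + E (ψ x)
  left_inv x := by simp [map_sub, hψ]
  right_inv x := by simp [map_add, hψ]
  map_add' x y := by simp only [map_add]; abel

lemma transvection_apply {G H : Type*} [AddCommGroup G] [AddCommGroup H]
    (E : H →+ G) (ψ : G →+ H) (hψ : ∀ a, ψ (E a) = 0) (x : G) :
    transvection E ψ hψ x = x - E (ψ x) := rfl

end Auto

lemma zmod_hom_apply {m : ℕ} [NeZero m] {H : Type*} [AddCommMonoid H] (g : ZMod m →+ H)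
    (a : ZMod m) : g a = a.val • g 1 := by
  conv_lhs => rw [show a = a.val • (1 : ZMod m) by
    rw [nsmul_eq_mul, mul_one, ZMod.natCast_zmod_val]]
  rw [map_nsmul]

/-- If `c ∈ Ĝ = Hom(G, C/p^N C)` satisfies `|im π̂_j(c)| = p^{n_j}` and
`|im π̂_l(c)| < p^{n_l}` for all `l > j`, then `c` is Bockquivalent to `γ_j^*`, the
standard dual homomorphism supported on the first generator of the `j`-th summand. -/
theorem stmt12 (p : ℕ) [Fact p.Prime] (hodd : Odd p)
    (t : ℕ) (ht : 0 < t) (n : Fin t → ℕ) (hmono : StrictMono n) (hn : ∀ j, 0 < n j)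
    (r : Fin t → ℕ) (hr : ∀ j, 0 < r j)
    (N : ℕ) (hN : ∀ j, n j ≤ N) (hNmax : ∃ j, n j = N)
    (c : (∀ j : Fin t, Fin (r j) → ZMod (p ^ n j)) →+ ZMod (p ^ N))
    (j : Fin t)
    (hj : Nat.card (Set.range fun v : Fin (r j) → ZMod (p ^ n j) => c (Pi.single j v))
        = p ^ n j)
    (hl : ∀ l : Fin t, j < l →
      Nat.card (Set.range fun v : Fin (r l) → ZMod (p ^ n l) => c (Pi.single l v))
        < p ^ n l) :
    BockEquiv p N (∀ j : Fin t, Fin (r j) → ZMod (p ^ n j)) c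
      ((embed p (n j) N (hN j)).comp
        ((Pi.evalAddMonoidHom (fun _ : Fin (r j) => ZMod (p ^ n j)) ⟨0, hr j⟩).comp
          (Pi.evalAddMonoidHom (fun i : Fin t => Fin (r i) → ZMod (p ^ n i)) j))) := by
  classical
  have hp : p.Prime := Fact.out
  haveI : NeZero p := ⟨hp.ne_zero⟩
  haveI : NeZero (p ^ N) := neZero_ppow
  have hN1 : 1 ≤ N := le_trans (hn j) (hN j)
  -- torsion of generators
  have gen_tor : ∀ (l : Fin t) (k : Fin (r l)),
      (p : ZMod (p ^ N)) ^ (n l) * c (gen p n r l k) = 0 := by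
    intro l k
    have h0 : ((p ^ n l : ℕ)) • gen p n r l k = 0 := by
      rw [gen, ← Pi.single_smul, ← Pi.single_smul', nsmul_eq_mul, mul_one,
        ZMod.natCast_self, Pi.single_zero, Pi.single_zero]
    calc (p : ZMod (p ^ N)) ^ (n l) * c (gen p n r l k)
        = ((p ^ n l : ℕ)) • c (gen p n r l k) := by rw [nsmul_eq_mul, Nat.cast_pow]
      _ = c (((p ^ n l : ℕ)) • gen p n r l k) := (map_nsmul c _ _).symm
      _ = 0 := by rw [h0, map_zero]
  -- a generator of full order in component j
  obtain ⟨i, hi⟩ := exists_full_gen (p := p) (hn j) (hN j)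
    (c.comp (AddMonoidHom.single (fun l : Fin t => Fin (r l) → ZMod (p ^ n l)) j)) hj
  obtain ⟨u, hu⟩ := exists_unit_of_not_small (hn j) (hN j) (gen_tor j i) hi
  obtain ⟨lam, hlam⟩ := exists_padic_unit (p := p) hN1 u⁻¹
  -- coefficients for the low components
  have hbex : ∀ (l : Fin t) (k : Fin (r l)), ∃ z : ZMod (p ^ N),
      l ≤ j → c (gen p n r l k) = z * (p : ZMod (p ^ N)) ^ (N - n j) := by
    intro l k
    by_cases hlj : l ≤ j
    · have hnl : n l ≤ n j := hmono.monotone hlj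
      have hkill : (p : ZMod (p ^ N)) ^ (n j) * c (gen p n r l k) = 0 := by
        rw [show (p : ZMod (p ^ N)) ^ (n j)
            = (p : ZMod (p ^ N)) ^ (n j - n l) * (p : ZMod (p ^ N)) ^ (n l) by
              rw [← pow_add]; congr 1; omega,
          mul_assoc, gen_tor, mul_zero]
      obtain ⟨z, hz⟩ := exists_of_pow_mul_eq_zero (hN j) hkill
      exact ⟨z, fun _ => hz⟩
    · exact ⟨0, fun h => absurd h hlj⟩
  choose b hb using hbex
  -- small generators in the high components
  have hsmall : ∀ l : Fin t, j < l → ∀ k : Fin (r l),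
      (p : ZMod (p ^ N)) ^ (n l - 1) * c (gen p n r l k) = 0 := by
    intro l hjl k
    exact small_of_card_lt (hn l) (hN l)
      (c.comp (AddMonoidHom.single (fun l : Fin t => Fin (r l) → ZMod (p ^ n l)) l))
      (hl l hjl) k
  have hzbex : ∀ (l : Fin t) (k : Fin (r l)), ∃ z : ZMod (p ^ N),
      j < l → c (gen p n r l k) = z * (p : ZMod (p ^ N)) ^ (N - (n l - 1)) := by
    intro l k
    by_cases hjl : j < l
    · obtain ⟨z, hz⟩ := exists_of_pow_mul_eq_zero
        (show n l - 1 ≤ N from le_trans (Nat.sub_le _ _) (hN l)) (hsmall l hjl k)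
      exact ⟨z, fun _ => hz⟩
    · exact ⟨0, fun h => absurd h hjl⟩
  choose zb hzb using hzbex
  -- value of c on the distinguished cyclic summand
  have hcE : ∀ a : ZMod (p ^ n j), c (inj p n r j i a)
      = ((a.val : ℕ) : ZMod (p ^ N)) * ((u : ZMod (p ^ N)) * (p : ZMod (p ^ N)) ^ (N - n j)) := by
    intro a
    haveI : NeZero (p ^ n j) := neZero_ppow
    have h1 := zmod_hom_apply (c.comp (inj p n r j i)) a
    simp only [AddMonoidHom.comp_apply] at h1
    rw [h1, inj_one, hu, nsmul_eq_mul]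
  -- the correction homomorphism ψ into the j-th cyclic factor
  set ψval : ∀ l : Fin t, Fin (r l) → ZMod (p ^ n j) := fun l k =>
    if l = j ∧ (k : ℕ) = (i : ℕ) then 0
    else if l ≤ j then
      ZMod.castHom (pow_dvd_pow p (hN j)) (ZMod (p ^ n j)) (((u⁻¹ : (ZMod (p ^ N))ˣ) : ZMod (p ^ N)) * b l k)
    else 0 with hψval
  have ψtor : ∀ (l : Fin t) (k : Fin (r l)), ((p ^ n l : ℕ) : ℤ) • ψval l k = 0 := by
    intro l k
    simp only [hψval]
    by_cases h1 : l = j ∧ (k : ℕ) = (i : ℕ)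
    · rw [if_pos h1, smul_zero]
    · rw [if_neg h1]
      by_cases h2 : l ≤ j
      · rw [if_pos h2]
        have hkill : ((p : ZMod (p ^ N)) ^ (n l)
              * (((u⁻¹ : (ZMod (p ^ N))ˣ) : ZMod (p ^ N)) * b l k))
            * (p : ZMod (p ^ N)) ^ (N - n j) = 0 := by
          have e1 : ((p : ZMod (p ^ N)) ^ (n l)
                * (((u⁻¹ : (ZMod (p ^ N))ˣ) : ZMod (p ^ N)) * b l k))
              * (p : ZMod (p ^ N)) ^ (N - n j)
              = ((u⁻¹ : (ZMod (p ^ N))ˣ) : ZMod (p ^ N))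
                * ((p : ZMod (p ^ N)) ^ (n l) * (b l k * (p : ZMod (p ^ N)) ^ (N - n j))) := by
            ring
          rw [e1, ← hb l k h2, gen_tor l k, mul_zero]
        have e2 : ((p ^ n l : ℕ) : ℤ) • (ZMod.castHom (pow_dvd_pow p (hN j)) (ZMod (p ^ n j))
              (((u⁻¹ : (ZMod (p ^ N))ˣ) : ZMod (p ^ N)) * b l k))
            = ZMod.castHom (pow_dvd_pow p (hN j)) (ZMod (p ^ n j))
              ((p : ZMod (p ^ N)) ^ (n l)
                * (((u⁻¹ : (ZMod (p ^ N))ˣ) : ZMod (p ^ N)) * b l k)) := by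
          conv_rhs => rw [map_mul, map_pow, map_natCast]
          rw [zsmul_eq_mul]
          push_cast
          ring
        rw [e2, castdown_eq_zero (hN j) hkill]
      · rw [if_neg h2, smul_zero]
  set ψ := mkHom ψval ψtor with hψdef
  have hψgen : ∀ (l : Fin t) (k : Fin (r l)), ψ (gen p n r l k) = ψval l k := by
    intro l k; rw [hψdef, mkHom_gen]
  have hψE : ∀ a : ZMod (p ^ n j), ψ (inj p n r j i a) = 0 := by
    haveI : NeZero (p ^ n j) := neZero_ppow
    have h1 : ψ.comp (inj p n r j i) = (0 : ZMod (p ^ n j) →+ ZMod (p ^ n j)) := by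
      apply zmodHom_ext
      simp only [AddMonoidHom.comp_apply, AddMonoidHom.zero_apply]
      rw [inj_one, hψgen, hψval]
      exact if_pos ⟨rfl, rfl⟩
    intro a; exact DFunLike.congr_fun h1 a
  -- the automorphism
  set π0 : Fin (r j) := ⟨0, hr j⟩ with hπ0
  set sw : Equiv.Perm (Fin (r j)) := Equiv.swap π0 i with hsw
  set σ : (∀ l : Fin t, Fin (r l) → ZMod (p ^ n l)) ≃+ (∀ l : Fin t, Fin (r l) → ZMod (p ^ n l)) :=
    ((swapComp p n r j sw).trans (transvection (inj p n r j i) ψ hψE)).symm with hσdef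
  have hσsymm : ∀ y, σ.symm y
      = (transvection (inj p n r j i) ψ hψE) ((swapComp p n r j sw) y) := by
    intro y; rw [hσdef, AddEquiv.symm_symm]; rfl
  -- the lifted error homomorphism
  set evals : ∀ l : Fin t, Fin (r l) → ZMod (p ^ (N + 1)) := fun l k =>
    if j < l then
      ((((-(((u⁻¹ : (ZMod (p ^ N))ˣ) : ZMod (p ^ N)) * zb l k)).val : ℕ) : ZMod (p ^ (N + 1))))
        * (p : ZMod (p ^ (N + 1))) ^ (N + 1 - n l)
    else 0 with hevals
  have etor : ∀ (l : Fin t) (k : Fin (r l)), ((p ^ n l : ℕ) : ℤ) • evals l k = 0 := by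
    intro l k
    simp only [hevals]
    by_cases h : j < l
    · rw [if_pos h]
      calc ((p ^ n l : ℕ) : ℤ)
            • (((((-(((u⁻¹ : (ZMod (p ^ N))ˣ) : ZMod (p ^ N)) * zb l k)).val : ℕ)
                : ZMod (p ^ (N + 1))))
              * (p : ZMod (p ^ (N + 1))) ^ (N + 1 - n l))
          = (p : ZMod (p ^ (N + 1))) ^ (n l)
            * (((((-(((u⁻¹ : (ZMod (p ^ N))ˣ) : ZMod (p ^ N)) * zb l k)).val : ℕ)
                : ZMod (p ^ (N + 1))))
              * (p : ZMod (p ^ (N + 1))) ^ (N + 1 - n l)) := by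
            rw [zsmul_eq_mul]; push_cast; ring
        _ = 0 := pow_mul_pow_eq_zero (show n l ≤ N + 1 from le_trans (hN l) (Nat.le_succ N)) _
    · rw [if_neg h, smul_zero]
  set ehom := mkHom evals etor with hedef
  have hegen : ∀ (l : Fin t) (k : Fin (r l)), ehom (gen p n r l k) = evals l k := by
    intro l k; rw [hedef, mkHom_gen]
  refine ⟨σ, lam, ehom, ?_⟩
  -- value of c on the cast-down coefficients
  have hcEcast : ∀ X : ZMod (p ^ N),
      c (inj p n r j i (ZMod.castHom (pow_dvd_pow p (hN j)) (ZMod (p ^ n j)) X))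
        = X * (p : ZMod (p ^ N)) ^ (N - n j) * (u : ZMod (p ^ N)) := by
    intro X
    rw [hcE]
    calc ((((ZMod.castHom (pow_dvd_pow p (hN j)) (ZMod (p ^ n j)) X).val : ℕ) : ZMod (p ^ N)))
          * ((u : ZMod (p ^ N)) * (p : ZMod (p ^ N)) ^ (N - n j))
        = ((((ZMod.castHom (pow_dvd_pow p (hN j)) (ZMod (p ^ n j)) X).val : ℕ) : ZMod (p ^ N))
            * (p : ZMod (p ^ N)) ^ (N - n j)) * (u : ZMod (p ^ N)) := by ring
      _ = X * (p : ZMod (p ^ N)) ^ (N - n j) * (u : ZMod (p ^ N)) := by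
          rw [castdown_val_mul (hN j)]
  have key : (embed p (n j) N (hN j)).comp
        ((Pi.evalAddMonoidHom (fun _ : Fin (r j) => ZMod (p ^ n j)) ⟨0, hr j⟩).comp
          (Pi.evalAddMonoidHom (fun i : Fin t => Fin (r i) → ZMod (p ^ n i)) j))
      = (AddMonoidHom.mulLeft (PadicInt.toZModPow N (lam : PadicInt p))).comp
          (c.comp σ.symm.toAddMonoidHom)
        + ((ZMod.castHom (pow_dvd_pow p (Nat.le_succ N)) (ZMod (p ^ N))).toAddMonoidHom.comp
            ehom) := by
    apply G_hom_ext
    intro l k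
    have hgoal : ∀ (A B : ZMod (p ^ N)),
        embed p (n j) N (hN j) ((gen p n r l k) j ⟨0, hr j⟩) = A →
        PadicInt.toZModPow N (lam : PadicInt p) * c (σ.symm (gen p n r l k))
          + ZMod.castHom (pow_dvd_pow p (Nat.le_succ N)) (ZMod (p ^ N)) (ehom (gen p n r l k))
            = B →
        A = B →
        ((embed p (n j) N (hN j)).comp
            ((Pi.evalAddMonoidHom (fun _ : Fin (r j) => ZMod (p ^ n j)) ⟨0, hr j⟩).comp
              (Pi.evalAddMonoidHom (fun i : Fin t => Fin (r i) → ZMod (p ^ n i)) j)))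
            (gen p n r l k)
          = ((AddMonoidHom.mulLeft (PadicInt.toZModPow N (lam : PadicInt p))).comp
              (c.comp σ.symm.toAddMonoidHom)
            + ((ZMod.castHom (pow_dvd_pow p (Nat.le_succ N)) (ZMod (p ^ N))).toAddMonoidHom.comp
                ehom)) (gen p n r l k) := by
      intro A B hA hB hAB
      simpa [AddMonoidHom.comp_apply, AddMonoidHom.add_apply,
        Pi.evalAddMonoidHom_apply] using hA.trans (hAB.trans hB.symm)
    rcases lt_trichotomy l j with hlt | heq | hgt
    · -- case l < j
      refine hgoal 0 0 ?_ ?_ rfl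
      · have h5 : (gen p n r l k) j = 0 := Pi.single_eq_of_ne (ne_of_lt hlt).symm _
        rw [h5]
        show embed p (n j) N (hN j) 0 = 0
        rw [map_zero]
      · have h1 : σ.symm (gen p n r l k) = gen p n r l k - inj p n r j i (ψval l k) := by
          rw [hσsymm, swapComp_gen_ne _ _ _ _ (ne_of_lt hlt), transvection_apply, hψgen]
        have h2 : ψval l k = ZMod.castHom (pow_dvd_pow p (hN j)) (ZMod (p ^ n j))
            (((u⁻¹ : (ZMod (p ^ N))ˣ) : ZMod (p ^ N)) * b l k) := by
          simp only [hψval]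
          rw [if_neg (by rintro ⟨h, -⟩; exact (ne_of_lt hlt) h), if_pos (le_of_lt hlt)]
        have h3 : c (σ.symm (gen p n r l k)) = 0 := by
          rw [h1, map_sub, h2, hcEcast, hb l k (le_of_lt hlt)]
          linear_combination (-(b l k * (p : ZMod (p ^ N)) ^ (N - n j))) * u.inv_mul
        have h4 : evals l k = 0 := by
          simp only [hevals]
          rw [if_neg (not_lt.2 (le_of_lt hlt))]
        rw [h3, mul_zero, hegen, h4, map_zero, add_zero]
    · -- case l = j
      subst heq
      by_cases hk0 : (k : ℕ) = 0
      · have hkπ : k = (⟨0, hr l⟩ : Fin (r l)) := Fin.ext hk0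
        subst hkπ
        refine hgoal ((p : ZMod (p ^ N)) ^ (N - n l)) _ ?_ rfl ?_
        · have h5 : (gen p n r l ⟨0, hr l⟩) l = Pi.single (⟨0, hr l⟩ : Fin (r l)) 1 :=
            Pi.single_eq_same _ _
          rw [h5, Pi.single_eq_same, embed_one]
        · have h1 : σ.symm (gen p n r l ⟨0, hr l⟩) = gen p n r l i := by
            rw [hσsymm, swapComp_gen_eq, transvection_apply, hψgen]
            have hswsymm : sw.symm (⟨0, hr l⟩ : Fin (r l)) = i := by
              rw [hsw, Equiv.symm_swap, ← hπ0, Equiv.swap_apply_left]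
            rw [hswsymm]
            have h0 : ψval l i = 0 := by
              simp [hψval]
            rw [h0, map_zero, sub_zero]
          have h4 : evals l (⟨0, hr l⟩ : Fin (r l)) = 0 := by
            simp only [hevals]
            rw [if_neg (lt_irrefl l)]
          rw [h1, hu, hegen, h4, map_zero, add_zero, hlam]
          linear_combination (-((p : ZMod (p ^ N)) ^ (N - n l))) * u.inv_mul
      · -- k not the distinguished coordinate
        have hkπ : k ≠ (⟨0, hr l⟩ : Fin (r l)) := fun h => hk0 (by rw [h])
        refine hgoal 0 0 ?_ ?_ rfl
        · have h5 : (gen p n r l k) l = Pi.single k 1 := Pi.single_eq_same _ _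
          rw [h5, Pi.single_eq_of_ne (Ne.symm hkπ), map_zero]
        · have hswk : sw.symm k ≠ i := by
            rw [hsw, Equiv.symm_swap]
            intro h
            apply hkπ
            have := congrArg (Equiv.swap π0 i) h
            rw [Equiv.swap_apply_self, Equiv.swap_apply_right, hπ0] at this
            exact this
          have h1 : σ.symm (gen p n r l k)
              = gen p n r l (sw.symm k) - inj p n r l i (ψval l (sw.symm k)) := by
            rw [hσsymm, swapComp_gen_eq, transvection_apply, hψgen]
          have h2 : ψval l (sw.symm k) = ZMod.castHom (pow_dvd_pow p (hN l)) (ZMod (p ^ n l))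
              (((u⁻¹ : (ZMod (p ^ N))ˣ) : ZMod (p ^ N)) * b l (sw.symm k)) := by
            simp only [hψval]
            rw [if_neg (by rintro ⟨-, h⟩; exact hswk (Fin.ext h)), if_pos (le_refl l)]
          have h3 : c (σ.symm (gen p n r l k)) = 0 := by
            rw [h1, map_sub, h2, hcEcast, hb l (sw.symm k) (le_refl l)]
            linear_combination (-(b l (sw.symm k) * (p : ZMod (p ^ N)) ^ (N - n l))) * u.inv_mul
          have h4 : evals l k = 0 := by
            simp only [hevals]
            rw [if_neg (lt_irrefl l)]
          rw [h3, mul_zero, hegen, h4, map_zero, add_zero]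
    · -- case j < l
      refine hgoal 0 0 ?_ ?_ rfl
      · have h5 : (gen p n r l k) j = 0 := Pi.single_eq_of_ne (ne_of_gt hgt).symm _
        rw [h5]
        show embed p (n j) N (hN j) 0 = 0
        rw [map_zero]
      · have h0 : ψval l k = 0 := by
          simp only [hψval]
          rw [if_neg (by rintro ⟨h, -⟩; exact (ne_of_gt hgt) h), if_neg (not_le.2 hgt)]
        have h1 : σ.symm (gen p n r l k) = gen p n r l k := by
          rw [hσsymm, swapComp_gen_ne _ _ _ _ (ne_of_gt hgt), transvection_apply, hψgen, h0,
            map_zero, sub_zero]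
        have h4 : evals l k
            = ((((-(((u⁻¹ : (ZMod (p ^ N))ˣ) : ZMod (p ^ N)) * zb l k)).val : ℕ)
                : ZMod (p ^ (N + 1))))
              * (p : ZMod (p ^ (N + 1))) ^ (N + 1 - n l) := by
          simp only [hevals]
          rw [if_pos hgt]
        have h6 : ZMod.castHom (pow_dvd_pow p (Nat.le_succ N)) (ZMod (p ^ N))
            (((((-(((u⁻¹ : (ZMod (p ^ N))ˣ) : ZMod (p ^ N)) * zb l k)).val : ℕ)
                : ZMod (p ^ (N + 1))))
              * (p : ZMod (p ^ (N + 1))) ^ (N + 1 - n l))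
            = (-(((u⁻¹ : (ZMod (p ^ N))ˣ) : ZMod (p ^ N)) * zb l k))
              * (p : ZMod (p ^ N)) ^ (N + 1 - n l) := by
          rw [map_mul, map_pow, map_natCast, map_natCast, ZMod.natCast_zmod_val]
        rw [h1, hegen, h4, h6, hzb l k hgt, hlam,
          show N - (n l - 1) = N + 1 - n l by have := hn l; have := hN l; omega]
        ring
  intro x
  exact DFunLike.congr_fun key x
end

section
/- Let G be a finite abelian p-group whose exponent is p^n, assume G is a free Z/p^n-module (i.e., homocyclic), and let C be cyclic of order p^{n+1}. Then Ĝ = Hom(G, C/p^n C) has exactly two Bockquivalence classes: the image of π_B, and the set of surjective homomorphisms G → C/p^n C. -/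
section aux

variable (p n : ℕ) [Fact p.Prime]

private lemma hpn : NeZero (p ^ n) := ⟨pow_ne_zero n (Fact.out (p := p.Prime)).pos.ne'⟩

attribute [local instance] hpn

private lemma not_isUnit_p (hn : 0 < n) : ¬ IsUnit (p : ZMod (p ^ n)) := by
  rw [ZMod.isUnit_prime_iff_not_dvd Fact.out]
  exact fun h => h (dvd_pow_self p hn.ne')

private lemma dvd_of_not_isUnit (hn : 0 < n) (a : ZMod (p ^ n)) (h : ¬ IsUnit a) :
    (p : ZMod (p ^ n)) ∣ a := by
  rw [← ZMod.natCast_zmod_val a] at h ⊢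
  rw [ZMod.isUnit_iff_coprime] at h
  have hp : p ∣ a.val := by
    by_contra hd
    exact h (Nat.Coprime.pow_right n ((Nat.Prime.coprime_iff_not_dvd Fact.out).2 hd).symm)
  obtain ⟨k, hk⟩ := hp
  exact ⟨(k : ZMod (p ^ n)), by rw [hk]; push_cast; ring⟩

private lemma not_isUnit_of_dvd (hn : 0 < n) (a : ZMod (p ^ n))
    (h : (p : ZMod (p ^ n)) ∣ a) : ¬ IsUnit a :=
  fun hu => not_isUnit_p p n hn (isUnit_of_dvd_unit h hu)

private lemma unit_add (hn : 0 < n) (a b : ZMod (p ^ n)) (ha : IsUnit a) (hb : ¬ IsUnit b) :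
    IsUnit (a + b) := by
  by_contra h
  have h1 := dvd_of_not_isUnit p n hn _ h
  have h2 := dvd_of_not_isUnit p n hn _ hb
  have h3 : (p : ZMod (p ^ n)) ∣ a := by
    have := dvd_sub h1 h2
    simpa using this
  exact not_isUnit_of_dvd p n hn a h3 ha

variable (r : ℕ)

private lemma csingle (c : (Fin r → ZMod (p ^ n)) →+ ZMod (p ^ n)) (i : Fin r)
    (w : ZMod (p ^ n)) : c (Pi.single i w) = w * c (Pi.single i 1) := by
  have h1 : (Pi.single i w : Fin r → ZMod (p ^ n)) = w.val • Pi.single i (1 : ZMod (p ^ n)) := by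
    funext j
    by_cases hj : j = i
    · subst hj
      simp [Pi.single_eq_same, nsmul_eq_mul, ZMod.natCast_zmod_val]
    · simp [Pi.single_eq_of_ne hj]
  rw [h1, map_nsmul, nsmul_eq_mul, ZMod.natCast_zmod_val]

private lemma coord (c : (Fin r → ZMod (p ^ n)) →+ ZMod (p ^ n)) (x : Fin r → ZMod (p ^ n)) :
    c x = ∑ i, x i * c (Pi.single i 1) := by
  conv_lhs => rw [← Finset.univ_sum_single x]
  rw [map_sum]
  exact Finset.sum_congr rfl fun i _ => csingle p n r c i (x i)

private lemma cupdate (c : (Fin r → ZMod (p ^ n)) →+ ZMod (p ^ n)) (i : Fin r)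
    (x : Fin r → ZMod (p ^ n)) (v : ZMod (p ^ n)) :
    c (Function.update x i v) = c x + (v - x i) * c (Pi.single i 1) := by
  have h : Function.update x i v = x + Pi.single i (v - x i) := by
    funext j
    by_cases hj : j = i
    · subst hj; simp
    · simp [Function.update_apply, hj, Pi.single_apply]
  rw [h, map_add, csingle]

private lemma surj_of_unit (c : (Fin r → ZMod (p ^ n)) →+ ZMod (p ^ n))
    (x : Fin r → ZMod (p ^ n)) (h : IsUnit (c x)) : Function.Surjective ⇑c := by
  obtain ⟨u, hu⟩ := h
  intro z
  refine ⟨(z * ↑u⁻¹).val • x, ?_⟩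
  rw [map_nsmul, nsmul_eq_mul, ZMod.natCast_zmod_val, ← hu, mul_assoc, Units.inv_mul, mul_one]

private lemma exists_unit_coord (hn : 0 < n) (c : (Fin r → ZMod (p ^ n)) →+ ZMod (p ^ n))
    (hc : Function.Surjective ⇑c) : ∃ i, IsUnit (c (Pi.single i 1)) := by
  obtain ⟨x, hx⟩ := hc 1
  by_contra h
  push_neg at h
  have hd : (p : ZMod (p ^ n)) ∣ c x := by
    rw [coord]
    exact Finset.dvd_sum fun i _ =>
      Dvd.dvd.mul_left (dvd_of_not_isUnit p n hn _ (h i)) _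
  rw [hx] at hd
  exact not_isUnit_p p n hn (isUnit_of_dvd_one hd)

private lemma dvd_of_torsion (y : ZMod (p ^ (n + 1))) (h : (p ^ n : ℕ) • y = 0) :
    (p : ZMod (p ^ (n + 1))) ∣ y := by
  haveI : NeZero (p ^ (n + 1)) := hpn p (n + 1)
  have h2 : ((p ^ n * y.val : ℕ) : ZMod (p ^ (n + 1))) = 0 := by
    push_cast
    rw [ZMod.natCast_zmod_val]
    rw [nsmul_eq_mul] at h
    push_cast at h
    exact h
  rw [ZMod.natCast_eq_zero_iff] at h2
  have hyp : p ∣ y.val := by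
    refine (mul_dvd_mul_iff_left
      (pow_ne_zero n (Fact.out (p := p.Prime)).pos.ne' : (p : ℕ) ^ n ≠ 0)).1 ?_
    rw [← pow_succ]
    exact h2
  obtain ⟨k, hk⟩ := hyp
  refine ⟨(k : ZMod (p ^ (n + 1))), ?_⟩
  rw [← ZMod.natCast_zmod_val y, hk]
  push_cast
  ring

private lemma torsion_values (e : (Fin r → ZMod (p ^ n)) →+ ZMod (p ^ (n + 1)))
    (x : Fin r → ZMod (p ^ n)) : (p ^ n : ℕ) • e x = 0 := by
  rw [← map_nsmul]
  have h : (p ^ n : ℕ) • x = 0 := by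
    funext i
    simp only [Pi.smul_apply, Pi.zero_apply, nsmul_eq_mul]
    rw [ZMod.natCast_self, zero_mul]
  rw [h, map_zero]

private noncomputable def psi (z : ZMod (p ^ (n + 1))) (hz : (p ^ n : ℕ) • z = 0) :
    ZMod (p ^ n) →+ ZMod (p ^ (n + 1)) :=
  ZMod.lift (p ^ n) ⟨zmultiplesHom _ z, by
    simp only [zmultiplesHom_apply]
    rw [← natCast_zsmul] at hz
    push_cast at hz ⊢
    exact hz⟩

private lemma psi_apply (z : ZMod (p ^ (n + 1))) (hz : (p ^ n : ℕ) • z = 0)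
    (a : ZMod (p ^ n)) : psi p n z hz a = a.val • z := by
  have ha : a = ((a.val : ℤ) : ZMod (p ^ n)) := by
    push_cast; rw [ZMod.natCast_zmod_val]
  rw [ha, psi, ZMod.lift_coe]
  simp [zmultiplesHom_apply, natCast_zsmul]

private lemma exists_lift (hn : 0 < n) (c : (Fin r → ZMod (p ^ n)) →+ ZMod (p ^ n))
    (hc : ∀ x, (p : ZMod (p ^ n)) ∣ c x) :
    ∃ f : (Fin r → ZMod (p ^ n)) →+ ZMod (p ^ (n + 1)),
      (ZMod.castHom (pow_dvd_pow p (Nat.le_succ n))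
        (ZMod (p ^ n))).toAddMonoidHom.comp f = c := by
  haveI : NeZero (p ^ (n + 1)) := hpn p (n + 1)
  choose y hy using fun i => hc (Pi.single i 1)
  set z : Fin r → ZMod (p ^ (n + 1)) :=
    fun i => (p : ZMod (p ^ (n + 1))) * ((y i).val : ZMod (p ^ (n + 1))) with hzdef
  have hzt : ∀ i, (p ^ n : ℕ) • z i = 0 := by
    intro i
    have h0 : ((p ^ (n + 1) : ℕ) : ZMod (p ^ (n + 1))) = 0 := ZMod.natCast_self _
    calc (p ^ n : ℕ) • z i
        = ((p ^ (n + 1) : ℕ) : ZMod (p ^ (n + 1))) * ((y i).val : ZMod (p ^ (n + 1))) := by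
          rw [nsmul_eq_mul, hzdef]; push_cast; ring
      _ = 0 := by rw [h0, zero_mul]
  refine ⟨∑ i, (psi p n (z i) (hzt i)).comp
    (Pi.evalAddMonoidHom (fun _ : Fin r => ZMod (p ^ n)) i), ?_⟩
  refine AddMonoidHom.ext fun x => ?_
  have hFx : (∑ i, (psi p n (z i) (hzt i)).comp
      (Pi.evalAddMonoidHom (fun _ : Fin r => ZMod (p ^ n)) i)) x
      = ∑ i, psi p n (z i) (hzt i) (x i) := by simp [Pi.evalAddMonoidHom]
  simp only [AddMonoidHom.comp_apply, RingHom.toAddMonoidHom_eq_coe, AddMonoidHom.coe_coe]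
  rw [hFx, map_sum, coord p n r c x]
  refine Finset.sum_congr rfl fun i _ => ?_
  rw [psi_apply, map_nsmul, nsmul_eq_mul, ZMod.natCast_zmod_val, hy i]
  simp only [hzdef]
  rw [map_mul, map_natCast, map_natCast, ZMod.natCast_zmod_val]

private noncomputable def sigma (c : (Fin r → ZMod (p ^ n)) →+ ZMod (p ^ n)) (i : Fin r)
    (u : (ZMod (p ^ n))ˣ) (hu : c (Pi.single i 1) = ↑u) :
    (Fin r → ZMod (p ^ n)) ≃+ (Fin r → ZMod (p ^ n)) where
  toFun x := Function.update x i (x i + ↑u⁻¹ * (x i - c x))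
  invFun y := Function.update y i (c y)
  left_inv x := by
    dsimp only
    have hc1 : c (Function.update x i (x i + ↑u⁻¹ * (x i - c x))) = x i := by
      rw [cupdate, hu]
      linear_combination (x i - c x) * u.inv_mul
    rw [hc1, Function.update_idem, Function.update_eq_self]
  right_inv y := by
    dsimp only
    rw [Function.update_idem, Function.update_self, cupdate, hu]
    have h3 : c y + ↑u⁻¹ * (c y - (c y + (c y - y i) * ↑u)) = y i := by
      linear_combination (y i - c y) * u.inv_mul
    rw [h3, Function.update_eq_self]
  map_add' x x' := by
    funext j
    by_cases hj : j = i
    · subst hj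
      simp only [Function.update_self, Pi.add_apply, map_add]
      ring
    · simp [Function.update_of_ne hj]

private lemma sigma_spec (c : (Fin r → ZMod (p ^ n)) →+ ZMod (p ^ n)) (i : Fin r)
    (u : (ZMod (p ^ n))ˣ) (hu : c (Pi.single i 1) = ↑u) (x : Fin r → ZMod (p ^ n)) :
    c (sigma p n r c i u hu x) = x i := by
  show c (Function.update x i (x i + ↑u⁻¹ * (x i - c x))) = x i
  rw [cupdate, hu]
  linear_combination (x i - c x) * u.inv_mul

private def swapAut (i j : Fin r) :
    (Fin r → ZMod (p ^ n)) ≃+ (Fin r → ZMod (p ^ n)) where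
  toFun x := x ∘ Equiv.swap i j
  invFun x := x ∘ Equiv.swap i j
  left_inv x := by funext k; simp [Function.comp, Equiv.swap_apply_self]
  right_inv x := by funext k; simp [Function.comp, Equiv.swap_apply_self]
  map_add' x x' := rfl

end aux

/-- If `G` is homocyclic of exponent `p^n` (a free `Z/pⁿ`-module of rank `r ≥ 1`),
then `Ĝ = Hom(G, C/pⁿC)` has exactly two Bockquivalence classes: the image of `π_B`
and the set of surjective homomorphisms `G → C/pⁿC`. -/
theorem stmt13 (p : ℕ) [Fact p.Prime] (n r : ℕ) (hn : 0 < n) (hr : 0 < r)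
    (hp2 : p ≠ 2 ∨ 1 < n) :
    ∀ c d : (Fin r → ZMod (p ^ n)) →+ ZMod (p ^ n),
      BockEquiv p n (Fin r → ZMod (p ^ n)) c d ↔
        (((∃ f : (Fin r → ZMod (p ^ n)) →+ ZMod (p ^ (n + 1)),
              (ZMod.castHom (pow_dvd_pow p (Nat.le_succ n))
                (ZMod (p ^ n))).toAddMonoidHom.comp f = c) ∧
            (∃ f : (Fin r → ZMod (p ^ n)) →+ ZMod (p ^ (n + 1)),
              (ZMod.castHom (pow_dvd_pow p (Nat.le_succ n))
                (ZMod (p ^ n))).toAddMonoidHom.comp f = d))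
          ∨ (Function.Surjective ⇑c ∧ Function.Surjective ⇑d)) := by
  intro c d
  haveI := hpn p n
  constructor
  · rintro ⟨σ, lam, e, hB⟩
    have hεdvd : ∀ x, (p : ZMod (p ^ n)) ∣
        (ZMod.castHom (pow_dvd_pow p (Nat.le_succ n)) (ZMod (p ^ n))) (e x) := by
      intro x
      have h1 := dvd_of_torsion p n (e x) (torsion_values p n r e x)
      have h2 := map_dvd (ZMod.castHom (pow_dvd_pow p (Nat.le_succ n)) (ZMod (p ^ n))) h1
      rwa [map_natCast] at h2
    have hlam : IsUnit ((PadicInt.toZModPow n) (lam : PadicInt p)) :=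
      (lam.isUnit).map (PadicInt.toZModPow n)
    by_cases hS : Function.Surjective ⇑c
    · right
      refine ⟨hS, ?_⟩
      obtain ⟨i, hi⟩ := exists_unit_coord p n r hn c hS
      refine surj_of_unit p n r d (σ (Pi.single i 1)) ?_
      rw [hB, σ.symm_apply_apply]
      exact unit_add p n hn _ _ (hlam.mul hi)
        (not_isUnit_of_dvd p n hn _ (hεdvd _))
    · left
      have hcall : ∀ x, ¬ IsUnit (c x) := fun x hx => hS (surj_of_unit p n r c x hx)
      have hdall : ∀ x, ¬ IsUnit (d x) := by
        intro x hx
        rw [hB] at hx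
        have h1 : (p : ZMod (p ^ n)) ∣
            (PadicInt.toZModPow n) (lam : PadicInt p) * c (σ.symm x) :=
          Dvd.dvd.mul_left (dvd_of_not_isUnit p n hn _ (hcall _)) _
        exact not_isUnit_of_dvd p n hn _ (dvd_add h1 (hεdvd x)) hx
      exact ⟨exists_lift p n r hn c (fun x => dvd_of_not_isUnit p n hn _ (hcall x)),
        exists_lift p n r hn d (fun x => dvd_of_not_isUnit p n hn _ (hdall x))⟩
  · rintro (⟨⟨fc, hfc⟩, ⟨fd, hfd⟩⟩ | ⟨hc, hd⟩)
    · refine ⟨AddEquiv.refl _, 1, fd - fc, fun x => ?_⟩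
      have h1 : (ZMod.castHom (pow_dvd_pow p (Nat.le_succ n)) (ZMod (p ^ n))) (fc x) = c x := by
        have := DFunLike.congr_fun hfc x
        simpa using this
      have h2 : (ZMod.castHom (pow_dvd_pow p (Nat.le_succ n)) (ZMod (p ^ n))) (fd x) = d x := by
        have := DFunLike.congr_fun hfd x
        simpa using this
      simp only [Units.val_one, map_one, one_mul, AddEquiv.refl_symm, AddEquiv.refl_apply,
        AddMonoidHom.sub_apply, map_sub, h1, h2]
      ring
    · obtain ⟨i, hi⟩ := exists_unit_coord p n r hn c hc
      obtain ⟨j, hj⟩ := exists_unit_coord p n r hn d hd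
      set E := ((sigma p n r d j hj.unit hj.unit_spec.symm).symm.trans
        ((swapAut p n r i j).trans (sigma p n r c i hi.unit hi.unit_spec.symm))) with hE
      have hx : ∀ x, c (E x) = d x := by
        intro x
        rw [hE, AddEquiv.trans_apply, AddEquiv.trans_apply, sigma_spec]
        show (((sigma p n r d j hj.unit hj.unit_spec.symm).symm x) ∘ Equiv.swap i j) i = d x
        rw [Function.comp_apply, Equiv.swap_apply_left]
        have h4 := sigma_spec p n r d j hj.unit hj.unit_spec.symm
          ((sigma p n r d j hj.unit hj.unit_spec.symm).symm x)
        rw [AddEquiv.apply_symm_apply] at h4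
        exact h4.symm
      refine ⟨E.symm, 1, 0, fun x => ?_⟩
      simp only [AddEquiv.symm_symm, Units.val_one, map_one, one_mul,
        AddMonoidHom.zero_apply, map_zero, add_zero]
      exact (hx x).symm
end
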